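/- arXiv:2108.04715 — 12 statements merged into one kernel-verified Lean document; each statement's English description precedes it below -/
import Mathlib

section
/- For real numbers $p, l, x > 0$, define $h(x; p, l) = \frac{\exp(-(x+p)^2/l^2) - \exp(-x^2/l^2)}{\exp(-p^2/l^2) - 1}$. If $l_1, l_2 > 0$ and there exists $x > 0$ with $h(x; p, l_1) = h(x; p, l_2)$, then $l_1 = l_2$. -/
open Real Set

lemma exp_slope_mono {u v : ℝ} (hu : 0 < u) (huv : u ≤ v) :
    (Real.exp u - 1) / u ≤ (Real.exp v - 1) / v := by
  have := convexOn_exp.secant_mono (a := 0) (x := u) (y := v) (Set.mem_univ _) (Set.mem_univ _)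
    (Set.mem_univ _) (ne_of_gt hu) (ne_of_gt (lt_of_lt_of_le hu huv)) huv
  simpa using this

lemma one_sub_exp_pos {a t : ℝ} (ha : 0 < a) (ht : 0 < t) :
    0 < 1 - Real.exp (-(a * t)) := by
  have : Real.exp (-(a * t)) < 1 := by
    rw [Real.exp_lt_one_iff]; nlinarith
  linarith

noncomputable def Gfun (a b c t : ℝ) : ℝ :=
  -(c * t) + Real.log (1 - Real.exp (-(b * t))) - Real.log (1 - Real.exp (-(a * t)))

lemma Gfun_hasDerivAt {a b c t : ℝ} (ha : 0 < a) (hb : 0 < b) (ht : 0 < t) :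
    HasDerivAt (Gfun a b c)
      (-c + b * Real.exp (-(b * t)) / (1 - Real.exp (-(b * t)))
          - a * Real.exp (-(a * t)) / (1 - Real.exp (-(a * t)))) t := by
  have hfb : HasDerivAt (fun s => 1 - Real.exp (-(b * s))) (b * Real.exp (-(b * t))) t := by
    have h1 : HasDerivAt (fun s : ℝ => -(b * s)) (-b) t := by
      simpa using ((hasDerivAt_id t).const_mul b).fun_neg
    have := (Real.hasDerivAt_exp (-(b * t))).comp t h1
    simpa [mul_comm] using (hasDerivAt_const t (1:ℝ)).fun_sub this
  have hfa : HasDerivAt (fun s => 1 - Real.exp (-(a * s))) (a * Real.exp (-(a * t))) t := by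
    have h1 : HasDerivAt (fun s : ℝ => -(a * s)) (-a) t := by
      simpa using ((hasDerivAt_id t).const_mul a).fun_neg
    have := (Real.hasDerivAt_exp (-(a * t))).comp t h1
    simpa [mul_comm] using (hasDerivAt_const t (1:ℝ)).fun_sub this
  have hlb := hfb.log (ne_of_gt (one_sub_exp_pos hb ht))
  have hla := hfa.log (ne_of_gt (one_sub_exp_pos ha ht))
  have hc : HasDerivAt (fun s : ℝ => -(c * s)) (-c) t := by
    simpa using ((hasDerivAt_id t).const_mul c).fun_neg
  exact (hc.fun_add hlb).fun_sub hla

lemma Gfun_strictAntiOn {a b c : ℝ} (ha : 0 < a) (hab : a < b) (hc : 0 < c) :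
    StrictAntiOn (Gfun a b c) (Set.Ioi 0) := by
  have hb : 0 < b := ha.trans hab
  apply strictAntiOn_of_deriv_neg (convex_Ioi 0)
  · intro t ht
    exact ((Gfun_hasDerivAt ha hb ht).continuousAt).continuousWithinAt
  · intro t ht
    rw [interior_Ioi] at ht
    rw [(Gfun_hasDerivAt ha hb ht).deriv]
    -- key inequality
    have key : b * Real.exp (-(b * t)) / (1 - Real.exp (-(b * t)))
        ≤ a * Real.exp (-(a * t)) / (1 - Real.exp (-(a * t)))  := by
      have hu : 0 < a * t := mul_pos ha ht
      have hv : 0 < b * t := mul_pos hb ht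
      have hs := exp_slope_mono hu (by nlinarith : a * t ≤ b * t)
      -- hs : (exp(at)-1)/(at) ≤ (exp(bt)-1)/(bt)
      have h1 : 0 < Real.exp (a*t) - 1 := by
        have := Real.add_one_lt_exp (ne_of_gt hu); linarith
      have h2 : 0 < Real.exp (b*t) - 1 := by
        have := Real.add_one_lt_exp (ne_of_gt hv); linarith
      have hmain : b * (Real.exp (a*t) - 1) ≤ a * (Real.exp (b*t) - 1) := by
        rw [div_le_div_iff₀ hu hv] at hs
        nlinarith
      have e1 : Real.exp (-(a*t)) = (Real.exp (a*t))⁻¹ := by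
        rw [← Real.exp_neg]
      have e2 : Real.exp (-(b*t)) = (Real.exp (b*t))⁻¹ := by
        rw [← Real.exp_neg]
      have pa : 0 < Real.exp (a*t) := Real.exp_pos _
      have pb : 0 < Real.exp (b*t) := Real.exp_pos _
      rw [e1, e2]
      rw [show b * (Real.exp (b*t))⁻¹ / (1 - (Real.exp (b*t))⁻¹) = b / (Real.exp (b*t) - 1) by
        field_simp,
        show a * (Real.exp (a*t))⁻¹ / (1 - (Real.exp (a*t))⁻¹) = a / (Real.exp (a*t) - 1) by
        field_simp]
      rw [div_le_div_iff₀ h2 h1]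
      nlinarith
    linarith

lemma expr_eq {x p l : ℝ} (hx : 0 < x) (hp : 0 < p) (hl : 0 < l) :
    (Real.exp (-(x + p) ^ 2 / l ^ 2) - Real.exp (-x ^ 2 / l ^ 2)) /
        (Real.exp (-p ^ 2 / l ^ 2) - 1)
      = Real.exp (Gfun (p^2) (2*x*p + p^2) (x^2) (l^2)⁻¹) := by
  set t : ℝ := (l^2)⁻¹ with htdef
  have ht : 0 < t := by positivity
  have ha : (0:ℝ) < 1 - Real.exp (-(p^2 * t)) := one_sub_exp_pos (by positivity) ht
  have hbpos : (0:ℝ) < 2*x*p + p^2 := by nlinarith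
  have hb : (0:ℝ) < 1 - Real.exp (-((2*x*p + p^2) * t)) := one_sub_exp_pos hbpos ht
  have hG : Real.exp (Gfun (p^2) (2*x*p + p^2) (x^2) t)
      = Real.exp (-(x^2 * t)) * (1 - Real.exp (-((2*x*p + p^2) * t)))
        / (1 - Real.exp (-(p^2 * t))) := by
    rw [Gfun, Real.exp_sub, Real.exp_add, Real.exp_log hb, Real.exp_log ha]
  rw [hG]
  have e1 : -(x + p) ^ 2 / l ^ 2 = -(x^2 * t) + -((2*x*p + p^2) * t) := by
    rw [htdef]; field_simp; ring
  have e2 : -x ^ 2 / l ^ 2 = -(x^2 * t) := by rw [htdef]; field_simp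
  have e3 : -p ^ 2 / l ^ 2 = -(p^2 * t) := by rw [htdef]; field_simp
  rw [e1, e2, e3, Real.exp_add]
  have hden : Real.exp (-(p^2 * t)) - 1 ≠ 0 := ne_of_lt (by linarith)
  field_simp
  rw [← neg_sub (1:ℝ) (rexp (-(t * p * (x * 2 + p)))), ← neg_sub (1:ℝ) (rexp (-(t * p ^ 2))), neg_div_neg_eq]

theorem h_injective (p : ℝ) (hp : 0 < p) (l₁ l₂ : ℝ) (hl₁ : 0 < l₁) (hl₂ : 0 < l₂)
    (h : ∃ x : ℝ, 0 < x ∧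
      (Real.exp (-(x + p) ^ 2 / l₁ ^ 2) - Real.exp (-x ^ 2 / l₁ ^ 2)) /
        (Real.exp (-p ^ 2 / l₁ ^ 2) - 1) =
      (Real.exp (-(x + p) ^ 2 / l₂ ^ 2) - Real.exp (-x ^ 2 / l₂ ^ 2)) /
        (Real.exp (-p ^ 2 / l₂ ^ 2) - 1)) :
    l₁ = l₂ := by
  obtain ⟨x, hx, heq⟩ := h
  rw [expr_eq hx hp hl₁, expr_eq hx hp hl₂] at heq
  have hGeq := Real.exp_injective heq
  have hanti := Gfun_strictAntiOn (a := p^2) (b := 2*x*p + p^2) (c := x^2)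
    (by positivity) (by nlinarith) (by positivity)
  have ht1 : ((l₁^2)⁻¹ : ℝ) ∈ Set.Ioi (0:ℝ) := by simp; positivity
  have ht2 : ((l₂^2)⁻¹ : ℝ) ∈ Set.Ioi (0:ℝ) := by simp; positivity
  have := hanti.injOn ht1 ht2 hGeq
  have hsq : l₁^2 = l₂^2 := inv_injective this
  nlinarith [sq_nonneg (l₁ - l₂), sq_nonneg (l₁ + l₂)]
end

section
/- For fixed $x, p > 0$, define $s(y) = \frac{\exp(-(x+p)^2 y^2) - 1}{\exp(-p^2 y^2) - 1}$ for $y > 0$. Then $s$ is strictly decreasing on $(0, \infty)$. -/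
open Real Set

lemma exp_sub_one_lt_mul_exp {u : ℝ} (hu : 0 < u) : Real.exp u - 1 < u * Real.exp u := by
  have h := Real.add_one_lt_exp (x := -u) (by linarith)
  rw [Real.exp_neg] at h
  have hE : 0 < Real.exp u := Real.exp_pos u
  have h1 : (Real.exp u)⁻¹ * Real.exp u = 1 := inv_mul_cancel₀ hE.ne'
  nlinarith [mul_lt_mul_of_pos_right h hE]

lemma key_ineq {u v : ℝ} (hu : 0 < u) (huv : u < v) :
    v * (Real.exp u - 1) < u * (Real.exp v - 1) := by
  set f : ℝ → ℝ := fun w => u * (Real.exp w - 1) - w * (Real.exp u - 1) with hf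
  have hderiv : ∀ w : ℝ, HasDerivAt f (u * Real.exp w - (Real.exp u - 1)) w := by
    intro w
    have h1 : HasDerivAt (fun w => u * (Real.exp w - 1)) (u * Real.exp w) w :=
      ((Real.hasDerivAt_exp w).sub_const 1).const_mul u
    have h2 : HasDerivAt (fun w : ℝ => w * (Real.exp u - 1)) (Real.exp u - 1) w := by
      simpa using (hasDerivAt_id w).mul_const (Real.exp u - 1)
    exact h1.sub h2
  have hmono : StrictMonoOn f (Set.Ici u) := by
    apply strictMonoOn_of_deriv_pos (convex_Ici u)
    · exact Continuous.continuousOn (by continuity)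
    · intro w hw
      rw [interior_Ici] at hw
      rw [(hderiv w).deriv]
      have h1 : Real.exp u - 1 < u * Real.exp u := exp_sub_one_lt_mul_exp hu
      have h2 : Real.exp u < Real.exp w := Real.exp_lt_exp.mpr hw
      nlinarith
  have := hmono (Set.self_mem_Ici) (Set.mem_Ici.mpr huv.le) huv
  simp only [hf] at this
  nlinarith [this]

lemma f_strictAnti {a b : ℝ} (hb : 0 < b) (hba : b < a) :
    StrictAntiOn (fun t : ℝ => (Real.exp (-a * t) - 1) / (Real.exp (-b * t) - 1))
      (Set.Ioi 0) := by
  have ha : 0 < a := hb.trans hba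
  have hDne : ∀ t : ℝ, 0 < t → Real.exp (-b * t) - 1 ≠ 0 := by
    intro t ht
    have : Real.exp (-b * t) < 1 := Real.exp_lt_one_iff.mpr (by nlinarith)
    linarith
  apply strictAntiOn_of_deriv_neg (convex_Ioi 0)
  · apply ContinuousOn.div
    · exact Continuous.continuousOn (by continuity)
    · exact Continuous.continuousOn (by continuity)
    · intro t ht; exact hDne t ht
  · intro t ht
    rw [interior_Ioi] at ht
    have ht' : (0:ℝ) < t := ht
    have hN : HasDerivAt (fun t : ℝ => Real.exp (-a * t) - 1)
        (Real.exp (-a * t) * (-a)) t := by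
      have : HasDerivAt (fun t : ℝ => -a * t) (-a) t := by
        simpa using (hasDerivAt_id t).const_mul (-a)
      exact (this.exp).sub_const 1
    have hD : HasDerivAt (fun t : ℝ => Real.exp (-b * t) - 1)
        (Real.exp (-b * t) * (-b)) t := by
      have : HasDerivAt (fun t : ℝ => -b * t) (-b) t := by
        simpa using (hasDerivAt_id t).const_mul (-b)
      exact (this.exp).sub_const 1
    have hq : HasDerivAt (fun t : ℝ => (Real.exp (-a * t) - 1) / (Real.exp (-b * t) - 1)) _ t :=
      hN.div hD (hDne t ht)
    rw [hq.deriv]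
    apply div_neg_of_neg_of_pos
    · -- numerator < 0
      have hkey := key_ineq (u := b * t) (v := a * t) (mul_pos hb ht')
        (by nlinarith)
      -- a * t * (exp (b t) - 1) < b * t * (exp (a t) - 1)
      have hkey2 : a * (Real.exp (b * t) - 1) < b * (Real.exp (a * t) - 1) := by
        nlinarith [hkey, ht']
      have hA : (0:ℝ) < Real.exp (a * t) := Real.exp_pos _
      have hB : (0:ℝ) < Real.exp (b * t) := Real.exp_pos _
      have e1 : Real.exp (-a * t) = (Real.exp (a * t))⁻¹ := by
        rw [← Real.exp_neg]; ring_nf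
      have e2 : Real.exp (-b * t) = (Real.exp (b * t))⁻¹ := by
        rw [← Real.exp_neg]; ring_nf
      rw [e1, e2]
      set A := Real.exp (a * t)
      set B := Real.exp (b * t)
      have hrw : A⁻¹ * (-a) * (B⁻¹ - 1) - (A⁻¹ - 1) * (B⁻¹ * (-b))
          = (a * (B - 1) - b * (A - 1)) * (A⁻¹ * B⁻¹) := by
        field_simp
        ring
      rw [hrw]
      exact mul_neg_of_neg_of_pos (by linarith) (by positivity)
    · exact pow_two_pos_of_ne_zero (hDne t ht)

theorem s_strictAnti (x p : ℝ) (hx : 0 < x) (hp : 0 < p) :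
    StrictAntiOn
      (fun y : ℝ =>
        (Real.exp (-(x + p) ^ 2 * y ^ 2) - 1) / (Real.exp (-p ^ 2 * y ^ 2) - 1))
      (Set.Ioi 0) := by
  have hf := f_strictAnti (a := (x + p) ^ 2) (b := p ^ 2) (by positivity)
    (by nlinarith)
  intro y1 hy1 y2 hy2 h
  have h1 : (0:ℝ) < y1 := hy1
  have h2 : (0:ℝ) < y2 := hy2
  have hsq : y1 ^ 2 < y2 ^ 2 := by nlinarith
  exact hf (Set.mem_Ioi.mpr (by positivity)) (Set.mem_Ioi.mpr (by positivity)) hsq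
end

section
/- Let $b > a > 1$ be real numbers and $u_1, u_2, u_3$ real numbers, not all zero. Then the function $h(t) = u_1(t - 1) + u_2(t^a - 1) + u_3(t^b - 1)$ has at most $3$ roots in $[1, \infty)$ (i.e., at most $3$ distinct $t \geq 1$ with $h(t) = 0$). -/
open Set

/-- A two-term rpow function `c₁ t^e₁ + c₂ t^e₂` with `e₁ < e₂` and coefficients not
both zero has at most one positive root. -/
lemma two_term_inj (e₁ e₂ c₁ c₂ : ℝ) (he : e₁ < e₂) (hc : ¬(c₁ = 0 ∧ c₂ = 0))
    {x y : ℝ} (hx : 0 < x) (hy : 0 < y)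
    (hfx : c₁ * x ^ e₁ + c₂ * x ^ e₂ = 0) (hfy : c₁ * y ^ e₁ + c₂ * y ^ e₂ = 0) :
    x = y := by
  by_cases hc2 : c₂ = 0
  · exfalso
    have hc1 : c₁ ≠ 0 := fun h => hc ⟨h, hc2⟩
    have hpos : (0:ℝ) < x ^ e₁ := Real.rpow_pos_of_pos hx e₁
    rw [hc2, zero_mul, add_zero, mul_eq_zero] at hfx
    rcases hfx with h | h
    · exact hc1 h
    · exact hpos.ne' h
  · have key : ∀ z : ℝ, 0 < z → c₁ * z ^ e₁ + c₂ * z ^ e₂ = 0 →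
        z ^ (e₂ - e₁) = -c₁ / c₂ := by
      intro z hz hfz
      have hz1 : (0:ℝ) < z ^ e₁ := Real.rpow_pos_of_pos hz e₁
      have hsplit : z ^ e₂ = z ^ e₁ * z ^ (e₂ - e₁) := by
        rw [← Real.rpow_add hz]; ring_nf
      rw [hsplit] at hfz
      have : z ^ e₁ * (c₁ + c₂ * z ^ (e₂ - e₁)) = 0 := by linarith [hfz]
      have h2 : c₁ + c₂ * z ^ (e₂ - e₁) = 0 := by
        rcases mul_eq_zero.1 this with h | h
        · exact absurd h hz1.ne'
        · exact h
      field_simp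
      linarith
    have hd : e₂ - e₁ ≠ 0 := sub_ne_zero.2 he.ne'
    have hxy : x ^ (e₂ - e₁) = y ^ (e₂ - e₁) :=
      (key x hx hfx).trans (key y hy hfy).symm
    calc x = (x ^ (e₂ - e₁)) ^ (e₂ - e₁)⁻¹ := (Real.rpow_rpow_inv hx.le hd).symm
      _ = (y ^ (e₂ - e₁)) ^ (e₂ - e₁)⁻¹ := by rw [hxy]
      _ = y := Real.rpow_rpow_inv hy.le hd

/-- Rolle's theorem on a positive interval, for a function differentiable on `(0, ∞)`. -/
lemma rolle_aux {f f' : ℝ → ℝ} {x y : ℝ} (hx : 0 < x) (hxy : x < y)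
    (hder : ∀ t, 0 < t → HasDerivAt f (f' t) t)
    (hfx : f x = 0) (hfy : f y = 0) : ∃ c ∈ Set.Ioo x y, f' c = 0 := by
  apply exists_hasDerivAt_eq_zero hxy
  · exact fun t ht => ((hder t (lt_of_lt_of_le hx ht.1)).continuousAt).continuousWithinAt
  · rw [hfx, hfy]
  · exact fun t ht => hder t (hx.trans ht.1)

/-- A three-term rpow function with strictly increasing exponents and coefficients
not all zero cannot have three distinct positive roots. -/
lemma three_term_roots (e₁ e₂ e₃ c₁ c₂ c₃ : ℝ) (h12 : e₁ < e₂) (h23 : e₂ < e₃)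
    (hc : ¬(c₁ = 0 ∧ c₂ = 0 ∧ c₃ = 0))
    {x y z : ℝ} (hx : 0 < x) (hxy : x < y) (hyz : y < z)
    (hfx : c₁ * x ^ e₁ + c₂ * x ^ e₂ + c₃ * x ^ e₃ = 0)
    (hfy : c₁ * y ^ e₁ + c₂ * y ^ e₂ + c₃ * y ^ e₃ = 0)
    (hfz : c₁ * z ^ e₁ + c₂ * z ^ e₂ + c₃ * z ^ e₃ = 0) : False := by
  have hy : 0 < y := hx.trans hxy
  have hz : 0 < z := hy.trans hyz
  by_cases hc1 : c₁ = 0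
  · subst hc1
    have hc' : ¬(c₂ = 0 ∧ c₃ = 0) := fun h => hc ⟨rfl, h.1, h.2⟩
    have := two_term_inj e₂ e₃ c₂ c₃ h23 hc' hx hy (by linarith) (by linarith)
    exact absurd this hxy.ne
  by_cases hc2 : c₂ = 0
  · subst hc2
    have hc' : ¬(c₁ = 0 ∧ c₃ = 0) := fun h => hc ⟨h.1, rfl, h.2⟩
    have := two_term_inj e₁ e₃ c₁ c₃ (h12.trans h23) hc' hx hy (by linarith) (by linarith)
    exact absurd this hxy.ne
  by_cases hc3 : c₃ = 0
  · subst hc3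
    have hc' : ¬(c₁ = 0 ∧ c₂ = 0) := fun h => hc ⟨h.1, h.2, rfl⟩
    have := two_term_inj e₁ e₂ c₁ c₂ h12 hc' hx hy (by linarith) (by linarith)
    exact absurd this hxy.ne
  -- all coefficients nonzero
  set d₂ := e₂ - e₁ with hd₂
  set d₃ := e₃ - e₁ with hd₃
  have hd₂pos : 0 < d₂ := by simp [hd₂]; linarith
  have hd₃pos : 0 < d₃ := by simp [hd₃]; linarith
  set g : ℝ → ℝ := fun t => c₁ + c₂ * t ^ d₂ + c₃ * t ^ d₃ with hg
  set g' : ℝ → ℝ := fun t => c₂ * (d₂ * t ^ (d₂ - 1)) + c₃ * (d₃ * t ^ (d₃ - 1)) with hg'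
  have hgroot : ∀ w : ℝ, 0 < w → c₁ * w ^ e₁ + c₂ * w ^ e₂ + c₃ * w ^ e₃ = 0 → g w = 0 := by
    intro w hw hfw
    have hw1 : (0:ℝ) < w ^ e₁ := Real.rpow_pos_of_pos hw e₁
    have h2 : w ^ e₂ = w ^ e₁ * w ^ d₂ := by rw [← Real.rpow_add hw, hd₂]; ring_nf
    have h3 : w ^ e₃ = w ^ e₁ * w ^ d₃ := by rw [← Real.rpow_add hw, hd₃]; ring_nf
    rw [h2, h3] at hfw
    have : w ^ e₁ * g w = 0 := by rw [hg]; ring_nf; ring_nf at hfw; linarith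
    rcases mul_eq_zero.1 this with h | h
    · exact absurd h hw1.ne'
    · exact h
  have hder : ∀ t : ℝ, 0 < t → HasDerivAt g (g' t) t := by
    intro t ht
    have h2 : HasDerivAt (fun s : ℝ => c₂ * s ^ d₂) (c₂ * (d₂ * t ^ (d₂ - 1))) t :=
      (Real.hasDerivAt_rpow_const (Or.inl ht.ne')).const_mul c₂
    have h3 : HasDerivAt (fun s : ℝ => c₃ * s ^ d₃) (c₃ * (d₃ * t ^ (d₃ - 1))) t :=
      (Real.hasDerivAt_rpow_const (Or.inl ht.ne')).const_mul c₃
    have := ((hasDerivAt_const t c₁).add h2).add h3; simp only [zero_add] at this; exact this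
  obtain ⟨p, hp, hpz⟩ := rolle_aux hx hxy hder (hgroot x hx hfx) (hgroot y hy hfy)
  obtain ⟨q, hq, hqz⟩ := rolle_aux hy hyz hder (hgroot y hy hfy) (hgroot z hz hfz)
  have hp0 : 0 < p := hx.trans hp.1
  have hq0 : 0 < q := hy.trans hq.1
  have hcc : ¬(c₂ * d₂ = 0 ∧ c₃ * d₃ = 0) := by
    rintro ⟨h, -⟩
    exact hc2 ((mul_eq_zero.1 h).resolve_right hd₂pos.ne')
  have hpq : p = q := by
    apply two_term_inj (d₂ - 1) (d₃ - 1) (c₂ * d₂) (c₃ * d₃) (by linarith) hcc hp0 hq0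
    · simp only [hg'] at hpz; linear_combination hpz
    · simp only [hg'] at hqz; linear_combination hqz
  have : p < q := hp.2.trans hq.1
  exact absurd hpq this.ne

theorem h_at_most_three_roots (a b : ℝ) (ha : 1 < a) (hab : a < b)
    (u₁ u₂ u₃ : ℝ) (hu : ¬(u₁ = 0 ∧ u₂ = 0 ∧ u₃ = 0)) :
    ∀ S : Finset ℝ,
      (∀ t ∈ S, 1 ≤ t ∧ u₁ * (t - 1) + u₂ * (t ^ a - 1) + u₃ * (t ^ b - 1) = 0) →
      S.card ≤ 3 := by
  intro S hS
  by_contra hcard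
  push_neg at hcard
  obtain ⟨T, hTS, hT4⟩ := Finset.exists_subset_card_eq (show 4 ≤ S.card from hcard)
  let e := T.orderIsoOfFin hT4
  set r : Fin 4 → ℝ := fun i => (e i : ℝ) with hr
  have hmono : StrictMono r := fun i j hij => by
    exact_mod_cast (e.lt_iff_lt.2 hij)
  have hroot : ∀ i, 1 ≤ r i ∧
      u₁ * (r i - 1) + u₂ * (r i ^ a - 1) + u₃ * (r i ^ b - 1) = 0 :=
    fun i => hS _ (hTS (e i).2)
  set h : ℝ → ℝ := fun t => u₁ * (t - 1) + u₂ * (t ^ a - 1) + u₃ * (t ^ b - 1) with hh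
  set h' : ℝ → ℝ := fun t => u₁ + u₂ * (a * t ^ (a - 1)) + u₃ * (b * t ^ (b - 1)) with hh'
  have hder : ∀ t : ℝ, 0 < t → HasDerivAt h (h' t) t := by
    intro t ht
    have h1 : HasDerivAt (fun s : ℝ => u₁ * (s - 1)) (u₁ * 1) t :=
      ((hasDerivAt_id t).sub_const 1).const_mul u₁
    have h2 : HasDerivAt (fun s : ℝ => u₂ * (s ^ a - 1)) (u₂ * (a * t ^ (a - 1))) t :=
      ((Real.hasDerivAt_rpow_const (Or.inl ht.ne')).sub_const 1).const_mul u₂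
    have h3 : HasDerivAt (fun s : ℝ => u₃ * (s ^ b - 1)) (u₃ * (b * t ^ (b - 1))) t :=
      ((Real.hasDerivAt_rpow_const (Or.inl ht.ne')).sub_const 1).const_mul u₃
    have := (h1.add h2).add h3
    simp only [mul_one] at this; exact this
  have h01 : r 0 < r 1 := hmono (by decide)
  have h12 : r 1 < r 2 := hmono (by decide)
  have h23 : r 2 < r 3 := hmono (by decide)
  have hr0pos : 0 < r 0 := lt_of_lt_of_le one_pos (hroot 0).1
  have hr1pos : 0 < r 1 := hr0pos.trans h01
  have hr2pos : 0 < r 2 := hr1pos.trans h12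
  obtain ⟨p, hp, hpz⟩ := rolle_aux hr0pos h01 hder (hroot 0).2 (hroot 1).2
  obtain ⟨q, hq, hqz⟩ := rolle_aux hr1pos h12 hder (hroot 1).2 (hroot 2).2
  obtain ⟨w, hw, hwz⟩ := rolle_aux hr2pos h23 hder (hroot 2).2 (hroot 3).2
  have hp0 : 0 < p := hr0pos.trans hp.1
  have hpq : p < q := hp.2.trans hq.1
  have hqw : q < w := hq.2.trans hw.1
  have hc : ¬(u₁ = 0 ∧ u₂ * a = 0 ∧ u₃ * b = 0) := by
    rintro ⟨h1, h2, h3⟩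
    exact hu ⟨h1, (mul_eq_zero.1 h2).resolve_right (by linarith),
      (mul_eq_zero.1 h3).resolve_right (by linarith)⟩
  have hform : ∀ v : ℝ, 0 < v → h' v = 0 →
      u₁ * v ^ (0:ℝ) + (u₂ * a) * v ^ (a - 1) + (u₃ * b) * v ^ (b - 1) = 0 := by
    intro v hv hvz
    simp only [hh'] at hvz
    rw [Real.rpow_zero]
    linear_combination hvz
  exact three_term_roots 0 (a - 1) (b - 1) u₁ (u₂ * a) (u₃ * b)
    (by linarith) (by linarith) hc hp0 hpq hqw
    (hform p hp0 hpz) (hform q (hp0.trans hpq) hqz)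
    (hform w (hp0.trans (hpq.trans hqw)) hwz)
end

section
/- Let $0 < x_1 < 1$, $0 < x_2 < 1$ with $x_1 \neq x_2$, and let $1 < A < B$ be real numbers. Then $\det \begin{pmatrix} x_1^{A-1} - 1 & x_1^{B-1} - 1 \\ x_2^{A-1} - 1 & x_2^{B-1} - 1 \end{pmatrix} \neq 0$. -/
open Real Set

/-- The auxiliary function `g x = (b-a) x^b - b x^(b-a) + a` is strictly decreasing on `(0,1]`. -/
lemma aux_strictAnti (a b : ℝ) (ha : 0 < a) (hab : a < b) :
    StrictAntiOn (fun x : ℝ => (b - a) * x ^ b - b * x ^ (b - a) + a) (Ioc 0 1) := by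
  apply strictAntiOn_of_deriv_neg (convex_Ioc 0 1)
  · apply ContinuousOn.add _ continuousOn_const
    apply ContinuousOn.sub
    · exact continuousOn_const.mul (continuousOn_id.rpow_const fun x hx => Or.inr (by linarith))
    · exact continuousOn_const.mul (continuousOn_id.rpow_const fun x hx => Or.inr (by linarith))
  · intro x hx
    rw [interior_Ioc] at hx
    obtain ⟨hx0, hx1⟩ := hx
    have hd : HasDerivAt (fun x : ℝ => (b - a) * x ^ b - b * x ^ (b - a) + a)
        ((b - a) * (b * x ^ (b - 1)) - b * ((b - a) * x ^ (b - a - 1))) x := by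
      exact (((Real.hasDerivAt_rpow_const (p := b) (Or.inl hx0.ne')).const_mul (b - a)).sub
        ((Real.hasDerivAt_rpow_const (p := b - a) (Or.inl hx0.ne')).const_mul b)).add_const a
    rw [hd.deriv]
    have h1 : x ^ (b - 1) < x ^ (b - a - 1) :=
      Real.rpow_lt_rpow_of_exponent_gt hx0 hx1 (by linarith)
    have hb0 : 0 < b * (b - a) := by nlinarith
    nlinarith [mul_lt_mul_of_pos_left h1 hb0]

lemma aux_pos (a b : ℝ) (ha : 0 < a) (hab : a < b) {x : ℝ} (hx0 : 0 < x) (hx1 : x < 1) :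
    0 < (b - a) * x ^ b - b * x ^ (b - a) + a := by
  have h := aux_strictAnti a b ha hab (mem_Ioc.2 ⟨hx0, hx1.le⟩)
    (mem_Ioc.2 ⟨one_pos, le_refl 1⟩) hx1
  simpa using h

/-- The function `h x = (x^b - 1)/(x^a - 1)` is strictly monotone on `(0,1)`. -/
lemma ratio_strictMono (a b : ℝ) (ha : 0 < a) (hab : a < b) :
    StrictMonoOn (fun x : ℝ => (x ^ b - 1) / (x ^ a - 1)) (Ioo 0 1) := by
  have key : ∀ x ∈ Ioo (0:ℝ) 1, HasDerivAt (fun x : ℝ => (x ^ b - 1) / (x ^ a - 1))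
      ((b * x ^ (b - 1) * (x ^ a - 1) - (x ^ b - 1) * (a * x ^ (a - 1))) / (x ^ a - 1) ^ 2) x := by
    intro x hx
    obtain ⟨hx0, hx1⟩ := hx
    have hden : x ^ a - 1 ≠ 0 := by
      have := Real.rpow_lt_one hx0.le hx1 ha
      linarith
    exact ((Real.hasDerivAt_rpow_const (p := b) (Or.inl hx0.ne')).sub_const 1).div
      ((Real.hasDerivAt_rpow_const (p := a) (Or.inl hx0.ne')).sub_const 1) hden
  apply strictMonoOn_of_deriv_pos (convex_Ioo 0 1)
  · intro x hx
    exact ((key x hx).differentiableAt.continuousAt).continuousWithinAt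
  · intro x hx
    rw [interior_Ioo] at hx
    rw [(key x hx).deriv]
    obtain ⟨hx0, hx1⟩ := hx
    have hden : x ^ a - 1 < 0 := by
      have := Real.rpow_lt_one hx0.le hx1 ha
      linarith
    apply div_pos _ (pow_two_pos_of_ne_zero hden.ne)
    -- numerator equals x^(a-1) * g x
    have hg := aux_pos a b ha hab hx0 hx1
    have e1 : x ^ (b - 1) * x ^ a = x ^ (a + b - 1) := by
      rw [← Real.rpow_add hx0]; ring_nf
    have e2 : x ^ (a - 1) * x ^ b = x ^ (a + b - 1) := by
      rw [← Real.rpow_add hx0]; ring_nf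
    have e3 : x ^ (a - 1) * x ^ (b - a) = x ^ (b - 1) := by
      rw [← Real.rpow_add hx0]; ring_nf
    have hxa1 : 0 < x ^ (a - 1) := Real.rpow_pos_of_pos hx0 _
    have expand : b * x ^ (b - 1) * (x ^ a - 1) - (x ^ b - 1) * (a * x ^ (a - 1))
        = x ^ (a - 1) * ((b - a) * x ^ b - b * x ^ (b - a) + a) := by
      linear_combination b * e1 - b * e2 + b * e3
    rw [expand]
    exact mul_pos hxa1 hg

theorem det2_ne_zero (x₁ x₂ A B : ℝ) (hx₁ : 0 < x₁) (hx₁' : x₁ < 1)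
    (hx₂ : 0 < x₂) (hx₂' : x₂ < 1) (hne : x₁ ≠ x₂) (hA : 1 < A) (hAB : A < B) :
    Matrix.det !![x₁ ^ (A - 1) - 1, x₁ ^ (B - 1) - 1;
                  x₂ ^ (A - 1) - 1, x₂ ^ (B - 1) - 1] ≠ 0 := by
  set a := A - 1 with ha_def
  set b := B - 1 with hb_def
  have ha : 0 < a := by simp [ha_def]; linarith
  have hab : a < b := by simp [ha_def, hb_def]; linarith
  have hd1 : x₁ ^ a - 1 ≠ 0 := by
    have := Real.rpow_lt_one hx₁.le hx₁' ha; linarith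
  have hd2 : x₂ ^ a - 1 ≠ 0 := by
    have := Real.rpow_lt_one hx₂.le hx₂' ha; linarith
  rw [Matrix.det_fin_two_of]
  intro h
  have hinj := (ratio_strictMono a b ha hab).injOn
  have : (x₁ ^ b - 1) / (x₁ ^ a - 1) = (x₂ ^ b - 1) / (x₂ ^ a - 1) := by
    rw [div_eq_div_iff hd1 hd2]
    nlinarith [h]
  exact hne (hinj (mem_Ioo.2 ⟨hx₁, hx₁'⟩) (mem_Ioo.2 ⟨hx₂, hx₂'⟩) this)
end

section
/- Let $1 < A < B$ be real numbers and define $f(x) = \frac{x^B - x^A}{x^A - 1}$ for $0 < x < 1$. Then $f$ is strictly monotone (increasing) on $(0, 1)$; in particular, $f$ is injective on $(0,1)$. -/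
open Real

lemma key_exp {a b : ℝ} (ha : 0 < a) (hab : a < b) :
    b * (Real.exp a - 1) < a * (Real.exp b - 1) := by
  have h := strictConvexOn_exp.secant_strict_mono (a := 0) (x := a) (y := b)
      trivial trivial trivial (ne_of_gt ha) (ne_of_gt (ha.trans hab)) hab
  simp only [Real.exp_zero, sub_zero] at h
  rw [div_lt_div_iff₀ ha (ha.trans hab)] at h
  nlinarith [h]

lemma key_ineq_s10 {A B x : ℝ} (hA : 0 < A) (hAB : A < B) (hx : 0 < x) (hx1 : x < 1) :
    B * x ^ (B - A) < A + (B - A) * x ^ B := by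
  have hlx : Real.log x < 0 := Real.log_neg hx hx1
  set t : ℝ := -Real.log x with ht
  have ht0 : 0 < t := by simp [ht]; linarith
  have h := key_exp (mul_pos hA ht0) (by nlinarith : A * t < B * t)
  have hu : Real.exp (A * t) = (x ^ A)⁻¹ := by
    rw [Real.rpow_def_of_pos hx, ← Real.exp_neg]
    congr 1; simp [ht]; ring
  have hv : Real.exp (B * t) = (x ^ B)⁻¹ := by
    rw [Real.rpow_def_of_pos hx, ← Real.exp_neg]
    congr 1; simp [ht]; ring
  rw [hu, hv] at h
  have hupos : (0:ℝ) < x ^ A := rpow_pos_of_pos hx A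
  have hvpos : (0:ℝ) < x ^ B := rpow_pos_of_pos hx B
  have hwpos : (0:ℝ) < x ^ (B - A) := rpow_pos_of_pos hx (B - A)
  have huw : x ^ A * x ^ (B - A) = x ^ B := by
    rw [← Real.rpow_add hx]; ring_nf
  have h' : B * t * ((x ^ A)⁻¹ - 1) * (x ^ A * x ^ B)
      < A * t * ((x ^ B)⁻¹ - 1) * (x ^ A * x ^ B) := by
    apply mul_lt_mul_of_pos_right h (mul_pos hupos hvpos)
  have hui : (x ^ A)⁻¹ * x ^ A = 1 := inv_mul_cancel₀ hupos.ne'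
  have hvi : (x ^ B)⁻¹ * x ^ B = 1 := inv_mul_cancel₀ hvpos.ne'
  have h2 : t * (B * (x ^ B - x ^ A * x ^ B)) < t * (A * (x ^ A - x ^ A * x ^ B)) := by
    calc t * (B * (x ^ B - x ^ A * x ^ B))
        = B * t * ((x ^ A)⁻¹ - 1) * (x ^ A * x ^ B) := by field_simp
      _ < A * t * ((x ^ B)⁻¹ - 1) * (x ^ A * x ^ B) := h'
      _ = t * (A * (x ^ A - x ^ A * x ^ B)) := by field_simp
  have h3 : B * (x ^ B - x ^ A * x ^ B) < A * (x ^ A - x ^ A * x ^ B) :=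
    lt_of_mul_lt_mul_left h2 ht0.le
  nlinarith [h3, huw, hupos, hvpos, hwpos, mul_pos hupos hwpos, mul_pos hupos hvpos]

theorem f_strictMono (A B : ℝ) (hA : 1 < A) (hAB : A < B) :
    StrictMonoOn (fun x : ℝ => (x ^ B - x ^ A) / (x ^ A - 1)) (Set.Ioo 0 1) := by
  have hA0 : (0:ℝ) < A := by linarith
  have hB0 : (0:ℝ) < B := by linarith
  have hconv : Convex ℝ (Set.Ioo (0:ℝ) 1) := convex_Ioo 0 1
  have hne : ∀ x ∈ Set.Ioo (0:ℝ) 1, x ^ A - 1 ≠ 0 := by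
    intro x hx
    have : x ^ A < 1 := Real.rpow_lt_one (le_of_lt hx.1) hx.2 hA0
    linarith
  have hderiv : ∀ x ∈ Set.Ioo (0:ℝ) 1,
      HasDerivAt (fun x : ℝ => (x ^ B - x ^ A) / (x ^ A - 1))
        (((B * x ^ (B-1) - A * x ^ (A-1)) * (x ^ A - 1)
          - (x ^ B - x ^ A) * (A * x ^ (A-1))) / (x ^ A - 1) ^ 2) x := by
    intro x hx
    have hB' : HasDerivAt (fun x : ℝ => x ^ B) (B * x ^ (B-1)) x :=
      Real.hasDerivAt_rpow_const (Or.inl hx.1.ne')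
    have hA' : HasDerivAt (fun x : ℝ => x ^ A) (A * x ^ (A-1)) x :=
      Real.hasDerivAt_rpow_const (Or.inl hx.1.ne')
    exact ((hB'.sub hA').div (hA'.sub_const 1) (hne x hx))
  apply strictMonoOn_of_deriv_pos hconv
  · intro x hx
    exact ((hderiv x hx).continuousAt).continuousWithinAt
  · intro x hx
    rw [interior_Ioo] at hx
    rw [(hderiv x hx).deriv]
    apply div_pos
    · -- numerator positive
      have hkey := key_ineq_s10 hA0 hAB hx.1 hx.2
      have hx0 := hx.1
      have hp : (0:ℝ) < x ^ (A - 1) := rpow_pos_of_pos hx0 _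
      have e1 : x ^ (B-1) * x ^ A = x ^ (A + B - 1) := by
        rw [← Real.rpow_add hx0]; ring_nf
      have e2 : x ^ (A-1) * x ^ A = x ^ (2*A - 1) := by
        rw [← Real.rpow_add hx0]; ring_nf
      have e3 : x ^ (A-1) * x ^ B = x ^ (A + B - 1) := by
        rw [← Real.rpow_add hx0]; ring_nf
      have e4 : x ^ (A-1) * x ^ (B - A) = x ^ (B - 1) := by
        rw [← Real.rpow_add hx0]; ring_nf
      nlinarith [mul_lt_mul_of_pos_left hkey hp, e1, e2, e3, e4]
    · have := hne x hx
      positivity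
end

section
/- Let $a, b, c > 0$ be pairwise distinct real numbers, and define $w(x) = \big(\exp(-x^2/a^2),\ \exp(-x^2/b^2),\ \exp(-x^2/c^2)\big) \in \mathbb{R}^3$. Then for any pairwise distinct positive reals $x_1, x_2, x_3$, the set $\{w(x_1), w(x_2), w(x_3)\}$ is linearly independent in $\mathbb{R}^3$. -/
open Real Set

private lemma exp_two (r₁ r₂ c₁ c₂ s₁ s₂ : ℝ) (hr : r₁ ≠ r₂) (hs : s₁ ≠ s₂)
    (h1 : c₁ * Real.exp (r₁ * s₁) + c₂ * Real.exp (r₂ * s₁) = 0)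
    (h2 : c₁ * Real.exp (r₁ * s₂) + c₂ * Real.exp (r₂ * s₂) = 0) :
    c₁ = 0 ∧ c₂ = 0 := by
  -- divide each by exp (r₁ * sᵢ)
  have k1 : c₁ = -(c₂ * Real.exp ((r₂ - r₁) * s₁)) := by
    have e := Real.exp_ne_zero (r₁ * s₁)
    have : c₁ * Real.exp (r₁ * s₁) = -(c₂ * Real.exp ((r₂ - r₁) * s₁)) * Real.exp (r₁ * s₁) := by
      rw [neg_mul, mul_assoc, ← Real.exp_add]
      have : (r₂ - r₁) * s₁ + r₁ * s₁ = r₂ * s₁ := by ring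
      rw [this]; linarith
    exact mul_right_cancel₀ e this
  have k2 : c₁ = -(c₂ * Real.exp ((r₂ - r₁) * s₂)) := by
    have e := Real.exp_ne_zero (r₁ * s₂)
    have : c₁ * Real.exp (r₁ * s₂) = -(c₂ * Real.exp ((r₂ - r₁) * s₂)) * Real.exp (r₁ * s₂) := by
      rw [neg_mul, mul_assoc, ← Real.exp_add]
      have : (r₂ - r₁) * s₂ + r₁ * s₂ = r₂ * s₂ := by ring
      rw [this]; linarith
    exact mul_right_cancel₀ e this
  have hc₂ : c₂ = 0 := by
    by_contra hne
    have heq : Real.exp ((r₂ - r₁) * s₁) = Real.exp ((r₂ - r₁) * s₂) := by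
      have h' : c₂ * Real.exp ((r₂ - r₁) * s₁) = c₂ * Real.exp ((r₂ - r₁) * s₂) := by
        have := k1.symm.trans k2
        linarith
      exact mul_left_cancel₀ hne h'
    have := Real.exp_injective heq
    have hr' : r₂ - r₁ ≠ 0 := sub_ne_zero.mpr (Ne.symm hr)
    exact hs (mul_left_cancel₀ hr' this)
  refine ⟨?_, hc₂⟩
  rw [k1, hc₂]; ring

private lemma exp_three_sorted (r₁ r₂ r₃ c₁ c₂ c₃ s₁ s₂ s₃ : ℝ)
    (h12 : r₁ ≠ r₂) (h13 : r₁ ≠ r₃) (h23 : r₂ ≠ r₃)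
    (hs12 : s₁ < s₂) (hs23 : s₂ < s₃)
    (e1 : c₁ * Real.exp (r₁ * s₁) + c₂ * Real.exp (r₂ * s₁) + c₃ * Real.exp (r₃ * s₁) = 0)
    (e2 : c₁ * Real.exp (r₁ * s₂) + c₂ * Real.exp (r₂ * s₂) + c₃ * Real.exp (r₃ * s₂) = 0)
    (e3 : c₁ * Real.exp (r₁ * s₃) + c₂ * Real.exp (r₂ * s₃) + c₃ * Real.exp (r₃ * s₃) = 0) :
    c₁ = 0 ∧ c₂ = 0 ∧ c₃ = 0 := by
  set μ₂ := r₂ - r₁ with hμ₂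
  set μ₃ := r₃ - r₁ with hμ₃
  have hμ₂0 : μ₂ ≠ 0 := sub_ne_zero.mpr (Ne.symm h12)
  have hμ₃0 : μ₃ ≠ 0 := sub_ne_zero.mpr (Ne.symm h13)
  have hμ : μ₂ ≠ μ₃ := fun h => h23 (by simp only [hμ₂, hμ₃] at h; linarith)
  set h : ℝ → ℝ := fun s => c₁ + c₂ * Real.exp (μ₂ * s) + c₃ * Real.exp (μ₃ * s) with hh
  have key : ∀ s, h s * Real.exp (r₁ * s) =
      c₁ * Real.exp (r₁ * s) + c₂ * Real.exp (r₂ * s) + c₃ * Real.exp (r₃ * s) := by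
    intro s
    simp only [hh, add_mul, mul_assoc, ← Real.exp_add]
    have a2 : μ₂ * s + r₁ * s = r₂ * s := by rw [hμ₂]; ring
    have a3 : μ₃ * s + r₁ * s = r₃ * s := by rw [hμ₃]; ring
    rw [a2, a3]
  have hz : ∀ s, c₁ * Real.exp (r₁ * s) + c₂ * Real.exp (r₂ * s) + c₃ * Real.exp (r₃ * s) = 0 →
      h s = 0 := by
    intro s hs0
    have := (key s).trans hs0
    exact (mul_eq_zero.mp this).resolve_right (Real.exp_ne_zero _)
  have h1 : h s₁ = 0 := hz s₁ e1
  have h2 : h s₂ = 0 := hz s₂ e2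
  have h3 : h s₃ = 0 := hz s₃ e3
  have hd : ∀ s : ℝ, HasDerivAt h (c₂ * μ₂ * Real.exp (μ₂ * s) + c₃ * μ₃ * Real.exp (μ₃ * s)) s := by
    intro s
    have d2 : HasDerivAt (fun s => Real.exp (μ₂ * s)) (Real.exp (μ₂ * s) * μ₂) s := by
      simpa using ((hasDerivAt_id s).const_mul μ₂).exp
    have d3 : HasDerivAt (fun s => Real.exp (μ₃ * s)) (Real.exp (μ₃ * s) * μ₃) s := by
      simpa using ((hasDerivAt_id s).const_mul μ₃).exp
    have := ((d2.const_mul c₂).const_add c₁).add (d3.const_mul c₃)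
    exact this.congr_deriv (by ring)
  have hcont : ∀ (u v : ℝ), ContinuousOn h (Icc u v) :=
    fun u v => (Continuous.continuousOn (by fun_prop))
  obtain ⟨ξ₁, hξ₁, hdξ₁⟩ := exists_hasDerivAt_eq_zero hs12 (hcont s₁ s₂) (h1.trans h2.symm)
    (fun x _ => hd x)
  obtain ⟨ξ₂, hξ₂, hdξ₂⟩ := exists_hasDerivAt_eq_zero hs23 (hcont s₂ s₃) (h2.trans h3.symm)
    (fun x _ => hd x)
  have hξne : ξ₁ ≠ ξ₂ := by
    have := hξ₁.2
    have := hξ₂.1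
    linarith
  obtain ⟨hc2, hc3⟩ := exp_two μ₂ μ₃ (c₂ * μ₂) (c₃ * μ₃) ξ₁ ξ₂ hμ hξne hdξ₁ hdξ₂
  have hc₂ : c₂ = 0 := by
    rcases mul_eq_zero.mp hc2 with h | h
    · exact h
    · exact absurd h hμ₂0
  have hc₃ : c₃ = 0 := by
    rcases mul_eq_zero.mp hc3 with h | h
    · exact h
    · exact absurd h hμ₃0
  have hc₁ : c₁ = 0 := by
    have := h1
    simp only [hh, hc₂, hc₃, zero_mul, add_zero] at this
    linarith
  exact ⟨hc₁, hc₂, hc₃⟩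

private lemma exp_three (r₁ r₂ r₃ c₁ c₂ c₃ s₁ s₂ s₃ : ℝ)
    (h12 : r₁ ≠ r₂) (h13 : r₁ ≠ r₃) (h23 : r₂ ≠ r₃)
    (hs12 : s₁ ≠ s₂) (hs13 : s₁ ≠ s₃) (hs23 : s₂ ≠ s₃)
    (e1 : c₁ * Real.exp (r₁ * s₁) + c₂ * Real.exp (r₂ * s₁) + c₃ * Real.exp (r₃ * s₁) = 0)
    (e2 : c₁ * Real.exp (r₁ * s₂) + c₂ * Real.exp (r₂ * s₂) + c₃ * Real.exp (r₃ * s₂) = 0)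
    (e3 : c₁ * Real.exp (r₁ * s₃) + c₂ * Real.exp (r₂ * s₃) + c₃ * Real.exp (r₃ * s₃) = 0) :
    c₁ = 0 ∧ c₂ = 0 ∧ c₃ = 0 := by
  rcases lt_or_gt_of_ne hs12 with h12' | h12' <;>
  rcases lt_or_gt_of_ne hs13 with h13' | h13' <;>
  rcases lt_or_gt_of_ne hs23 with h23' | h23'
  · exact exp_three_sorted r₁ r₂ r₃ c₁ c₂ c₃ s₁ s₂ s₃ h12 h13 h23 h12' h23' e1 e2 e3
  · exact exp_three_sorted r₁ r₂ r₃ c₁ c₂ c₃ s₁ s₃ s₂ h12 h13 h23 h13' h23' e1 e3 e2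
  · linarith
  · exact exp_three_sorted r₁ r₂ r₃ c₁ c₂ c₃ s₃ s₁ s₂ h12 h13 h23 h13' h12' e3 e1 e2
  · exact exp_three_sorted r₁ r₂ r₃ c₁ c₂ c₃ s₂ s₁ s₃ h12 h13 h23 h12' h13' e2 e1 e3
  · linarith
  · exact exp_three_sorted r₁ r₂ r₃ c₁ c₂ c₃ s₂ s₃ s₁ h12 h13 h23 h23' h13' e2 e3 e1
  · exact exp_three_sorted r₁ r₂ r₃ c₁ c₂ c₃ s₃ s₂ s₁ h12 h13 h23 h23' h12' e3 e2 e1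

theorem w_linearIndependent (a b c : ℝ) (ha : 0 < a) (hb : 0 < b) (hc : 0 < c)
    (hab : a ≠ b) (hbc : b ≠ c) (hca : c ≠ a)
    (x₁ x₂ x₃ : ℝ) (hx₁ : 0 < x₁) (hx₂ : 0 < x₂) (hx₃ : 0 < x₃)
    (h₁₂ : x₁ ≠ x₂) (h₂₃ : x₂ ≠ x₃) (h₃₁ : x₃ ≠ x₁) :
    LinearIndependent ℝ
      (fun i : Fin 3 =>
        (fun x : ℝ =>
          (![Real.exp (-x ^ 2 / a ^ 2), Real.exp (-x ^ 2 / b ^ 2),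
             Real.exp (-x ^ 2 / c ^ 2)] : Fin 3 → ℝ)) (![x₁, x₂, x₃] i)) := by
  rw [Fintype.linearIndependent_iff]
  intro g hg
  have sq_inj : ∀ u v : ℝ, 0 < u → 0 < v → u ≠ v → u ^ 2 ≠ v ^ 2 := by
    intro u v hu hv huv h
    exact huv ((sq_eq_sq₀ hu.le hv.le).mp h)
  have hr12 : (-x₁ ^ 2 : ℝ) ≠ -x₂ ^ 2 := by
    simp only [ne_eq, neg_inj]; exact sq_inj _ _ hx₁ hx₂ h₁₂
  have hr13 : (-x₁ ^ 2 : ℝ) ≠ -x₃ ^ 2 := by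
    simp only [ne_eq, neg_inj]; exact sq_inj _ _ hx₁ hx₃ h₃₁.symm
  have hr23 : (-x₂ ^ 2 : ℝ) ≠ -x₃ ^ 2 := by
    simp only [ne_eq, neg_inj]; exact sq_inj _ _ hx₂ hx₃ h₂₃
  have hsab : ((a ^ 2)⁻¹ : ℝ) ≠ (b ^ 2)⁻¹ := by
    simp only [ne_eq, inv_inj]; exact sq_inj _ _ ha hb hab
  have hsac : ((a ^ 2)⁻¹ : ℝ) ≠ (c ^ 2)⁻¹ := by
    simp only [ne_eq, inv_inj]; exact sq_inj _ _ ha hc hca.symm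
  have hsbc : ((b ^ 2)⁻¹ : ℝ) ≠ (c ^ 2)⁻¹ := by
    simp only [ne_eq, inv_inj]; exact sq_inj _ _ hb hc hbc
  have hsum := hg
  rw [Fin.sum_univ_three] at hsum
  have eq0 := congrFun hsum 0
  have eq1 := congrFun hsum 1
  have eq2 := congrFun hsum 2
  simp only [Pi.add_apply, Pi.smul_apply, smul_eq_mul, Matrix.cons_val_zero,
    Matrix.cons_val_one, Matrix.head_cons, Matrix.cons_val_two, Matrix.tail_cons,
    Pi.zero_apply] at eq0 eq1 eq2
  have conv : ∀ x d : ℝ, -x ^ 2 / d ^ 2 = (-x ^ 2) * (d ^ 2)⁻¹ := fun x d => div_eq_mul_inv _ _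
  rw [conv x₁ a, conv x₂ a, conv x₃ a] at eq0
  rw [conv x₁ b, conv x₂ b, conv x₃ b] at eq1
  rw [conv x₁ c, conv x₂ c, conv x₃ c] at eq2
  obtain ⟨hg0, hg1, hg2⟩ := exp_three (-x₁ ^ 2) (-x₂ ^ 2) (-x₃ ^ 2) (g 0) (g 1) (g 2)
    ((a ^ 2)⁻¹) ((b ^ 2)⁻¹) ((c ^ 2)⁻¹) hr12 hr13 hr23 hsab hsac hsbc eq0 eq1 eq2
  intro i
  fin_cases i <;> assumption
end

section
/- Let $l_{11}, l_{12}, l_{21}, l_{22} > 0$ be pairwise distinct, and let $0 < a_1 < a_2 < a_3$ be real numbers. Define $v(x) = \big(\exp(-x^2/l_{11}^2), \exp(-x^2/l_{12}^2), \exp(-x^2/l_{21}^2), \exp(-x^2/l_{22}^2)\big) \in \mathbb{R}^4$. Then the four vectors $v(0), v(a_1), v(a_2), v(a_3)$ are linearly independent, i.e., the $4 \times 4$ matrix with columns $v(0), v(a_1), v(a_2), v(a_3)$ has nonzero determinant. -/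
private lemma exp2 {μ₁ μ₂ : ℝ} (hμ : μ₁ < μ₂) (α₁ α₂ : ℝ) {c₁ c₂ : ℝ} (hc : c₁ < c₂)
    (h1 : α₁ * Real.exp (μ₁ * c₁) + α₂ * Real.exp (μ₂ * c₁) = 0)
    (h2 : α₁ * Real.exp (μ₁ * c₂) + α₂ * Real.exp (μ₂ * c₂) = 0) :
    α₁ = 0 ∧ α₂ = 0 := by
  have key : ∀ c : ℝ, α₁ * Real.exp (μ₁ * c) + α₂ * Real.exp (μ₂ * c) = 0 →
      α₁ + α₂ * Real.exp ((μ₂ - μ₁) * c) = 0 := by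
    intro c h
    rw [show μ₂ * c = (μ₂ - μ₁) * c + μ₁ * c by ring, Real.exp_add] at h
    have h' : (α₁ + α₂ * Real.exp ((μ₂ - μ₁) * c)) * Real.exp (μ₁ * c) = 0 := by
      linear_combination h
    rcases mul_eq_zero.mp h' with h'' | h''
    · exact h''
    · exact absurd h'' (Real.exp_ne_zero _)
  have e1 := key c₁ h1
  have e2 := key c₂ h2
  have hE : Real.exp ((μ₂ - μ₁) * c₁) < Real.exp ((μ₂ - μ₁) * c₂) :=
    Real.exp_lt_exp.2 (by nlinarith)
  have hA : α₂ * (Real.exp ((μ₂ - μ₁) * c₁) - Real.exp ((μ₂ - μ₁) * c₂)) = 0 := by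
    linear_combination e1 - e2
  rcases mul_eq_zero.mp hA with h | h
  · constructor
    · have := e1; rw [h] at this; linarith
    · exact h
  · exact absurd h (by linarith)

private lemma exp3 {μ₁ μ₂ μ₃ : ℝ} (h12 : μ₁ < μ₂) (h23 : μ₂ < μ₃)
    (α₁ α₂ α₃ : ℝ) {c₁ c₂ c₃ : ℝ} (hc12 : c₁ < c₂) (hc23 : c₂ < c₃)
    (h1 : α₁ * Real.exp (μ₁ * c₁) + α₂ * Real.exp (μ₂ * c₁) + α₃ * Real.exp (μ₃ * c₁) = 0)
    (h2 : α₁ * Real.exp (μ₁ * c₂) + α₂ * Real.exp (μ₂ * c₂) + α₃ * Real.exp (μ₃ * c₂) = 0)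
    (h3 : α₁ * Real.exp (μ₁ * c₃) + α₂ * Real.exp (μ₂ * c₃) + α₃ * Real.exp (μ₃ * c₃) = 0) :
    α₁ = 0 ∧ α₂ = 0 ∧ α₃ = 0 := by
  set g : ℝ → ℝ := fun c => α₁ + α₂ * Real.exp ((μ₂ - μ₁) * c) + α₃ * Real.exp ((μ₃ - μ₁) * c)
    with hgdef
  have gzero : ∀ c : ℝ,
      α₁ * Real.exp (μ₁ * c) + α₂ * Real.exp (μ₂ * c) + α₃ * Real.exp (μ₃ * c) = 0 →
      g c = 0 := by
    intro c h
    rw [show μ₂ * c = (μ₂ - μ₁) * c + μ₁ * c by ring,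
      show μ₃ * c = (μ₃ - μ₁) * c + μ₁ * c by ring, Real.exp_add, Real.exp_add] at h
    have h' : g c * Real.exp (μ₁ * c) = 0 := by
      simp only [hgdef]; linear_combination h
    rcases mul_eq_zero.mp h' with h'' | h''
    · exact h''
    · exact absurd h'' (Real.exp_ne_zero _)
  have hderiv : ∀ x : ℝ, HasDerivAt g
      (α₂ * (μ₂ - μ₁) * Real.exp ((μ₂ - μ₁) * x) + α₃ * (μ₃ - μ₁) * Real.exp ((μ₃ - μ₁) * x)) x := by
    intro x
    have d2 : HasDerivAt (fun c : ℝ => Real.exp ((μ₂ - μ₁) * c))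
        (Real.exp ((μ₂ - μ₁) * x) * (μ₂ - μ₁)) x := by simpa using ((hasDerivAt_id x).const_mul (μ₂ - μ₁)).exp
    have d3 : HasDerivAt (fun c : ℝ => Real.exp ((μ₃ - μ₁) * c))
        (Real.exp ((μ₃ - μ₁) * x) * (μ₃ - μ₁)) x := by simpa using ((hasDerivAt_id x).const_mul (μ₃ - μ₁)).exp
    have := ((hasDerivAt_const x α₁).add (d2.const_mul α₂)).add (d3.const_mul α₃)
    exact this.congr_deriv (by ring)
  have hcont : ∀ a b : ℝ, ContinuousOn g (Set.Icc a b) :=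
    fun a b => (Continuous.continuousOn (by fun_prop))
  obtain ⟨d₁, hd₁, hz₁⟩ := exists_hasDerivAt_eq_zero hc12 (hcont c₁ c₂)
    ((gzero c₁ h1).trans (gzero c₂ h2).symm) (fun x _ => hderiv x)
  obtain ⟨d₂, hd₂, hz₂⟩ := exists_hasDerivAt_eq_zero hc23 (hcont c₂ c₃)
    ((gzero c₂ h2).trans (gzero c₃ h3).symm) (fun x _ => hderiv x)
  have hdd : d₁ < d₂ := lt_trans hd₁.2 hd₂.1
  obtain ⟨hA, hB⟩ := exp2 (show μ₂ - μ₁ < μ₃ - μ₁ by linarith) (α₂ * (μ₂ - μ₁)) (α₃ * (μ₃ - μ₁)) hdd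
    (by linear_combination hz₁) (by linear_combination hz₂)
  have hα₂ : α₂ = 0 := by
    rcases mul_eq_zero.mp hA with h | h
    · exact h
    · linarith
  have hα₃ : α₃ = 0 := by
    rcases mul_eq_zero.mp hB with h | h
    · exact h
    · linarith
  refine ⟨?_, hα₂, hα₃⟩
  have := gzero c₁ h1
  simp only [hgdef, hα₂, hα₃] at this
  linarith

private lemma exp4 {μ₁ μ₂ μ₃ μ₄ : ℝ} (h12 : μ₁ < μ₂) (h23 : μ₂ < μ₃) (h34 : μ₃ < μ₄)
    (α₁ α₂ α₃ α₄ : ℝ) {c₁ c₂ c₃ c₄ : ℝ} (hc12 : c₁ < c₂) (hc23 : c₂ < c₃) (hc34 : c₃ < c₄)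
    (h1 : α₁ * Real.exp (μ₁ * c₁) + α₂ * Real.exp (μ₂ * c₁) + α₃ * Real.exp (μ₃ * c₁)
        + α₄ * Real.exp (μ₄ * c₁) = 0)
    (h2 : α₁ * Real.exp (μ₁ * c₂) + α₂ * Real.exp (μ₂ * c₂) + α₃ * Real.exp (μ₃ * c₂)
        + α₄ * Real.exp (μ₄ * c₂) = 0)
    (h3 : α₁ * Real.exp (μ₁ * c₃) + α₂ * Real.exp (μ₂ * c₃) + α₃ * Real.exp (μ₃ * c₃)
        + α₄ * Real.exp (μ₄ * c₃) = 0)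
    (h4 : α₁ * Real.exp (μ₁ * c₄) + α₂ * Real.exp (μ₂ * c₄) + α₃ * Real.exp (μ₃ * c₄)
        + α₄ * Real.exp (μ₄ * c₄) = 0) :
    α₁ = 0 ∧ α₂ = 0 ∧ α₃ = 0 ∧ α₄ = 0 := by
  set g : ℝ → ℝ := fun c => α₁ + α₂ * Real.exp ((μ₂ - μ₁) * c) + α₃ * Real.exp ((μ₃ - μ₁) * c)
      + α₄ * Real.exp ((μ₄ - μ₁) * c) with hgdef
  have gzero : ∀ c : ℝ,
      α₁ * Real.exp (μ₁ * c) + α₂ * Real.exp (μ₂ * c) + α₃ * Real.exp (μ₃ * c)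
        + α₄ * Real.exp (μ₄ * c) = 0 → g c = 0 := by
    intro c h
    rw [show μ₂ * c = (μ₂ - μ₁) * c + μ₁ * c by ring,
      show μ₃ * c = (μ₃ - μ₁) * c + μ₁ * c by ring,
      show μ₄ * c = (μ₄ - μ₁) * c + μ₁ * c by ring,
      Real.exp_add, Real.exp_add, Real.exp_add] at h
    have h' : g c * Real.exp (μ₁ * c) = 0 := by
      simp only [hgdef]; linear_combination h
    rcases mul_eq_zero.mp h' with h'' | h''
    · exact h''
    · exact absurd h'' (Real.exp_ne_zero _)
  have hderiv : ∀ x : ℝ, HasDerivAt g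
      (α₂ * (μ₂ - μ₁) * Real.exp ((μ₂ - μ₁) * x) + α₃ * (μ₃ - μ₁) * Real.exp ((μ₃ - μ₁) * x)
        + α₄ * (μ₄ - μ₁) * Real.exp ((μ₄ - μ₁) * x)) x := by
    intro x
    have d2 : HasDerivAt (fun c : ℝ => Real.exp ((μ₂ - μ₁) * c))
        (Real.exp ((μ₂ - μ₁) * x) * (μ₂ - μ₁)) x := by simpa using ((hasDerivAt_id x).const_mul (μ₂ - μ₁)).exp
    have d3 : HasDerivAt (fun c : ℝ => Real.exp ((μ₃ - μ₁) * c))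
        (Real.exp ((μ₃ - μ₁) * x) * (μ₃ - μ₁)) x := by simpa using ((hasDerivAt_id x).const_mul (μ₃ - μ₁)).exp
    have d4 : HasDerivAt (fun c : ℝ => Real.exp ((μ₄ - μ₁) * c))
        (Real.exp ((μ₄ - μ₁) * x) * (μ₄ - μ₁)) x := by simpa using ((hasDerivAt_id x).const_mul (μ₄ - μ₁)).exp
    have := (((hasDerivAt_const x α₁).add (d2.const_mul α₂)).add (d3.const_mul α₃)).add
      (d4.const_mul α₄)
    exact this.congr_deriv (by ring)
  have hcont : ∀ a b : ℝ, ContinuousOn g (Set.Icc a b) :=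
    fun a b => (Continuous.continuousOn (by fun_prop))
  obtain ⟨d₁, hd₁, hz₁⟩ := exists_hasDerivAt_eq_zero hc12 (hcont c₁ c₂)
    ((gzero c₁ h1).trans (gzero c₂ h2).symm) (fun x _ => hderiv x)
  obtain ⟨d₂, hd₂, hz₂⟩ := exists_hasDerivAt_eq_zero hc23 (hcont c₂ c₃)
    ((gzero c₂ h2).trans (gzero c₃ h3).symm) (fun x _ => hderiv x)
  obtain ⟨d₃, hd₃, hz₃⟩ := exists_hasDerivAt_eq_zero hc34 (hcont c₃ c₄)
    ((gzero c₃ h3).trans (gzero c₄ h4).symm) (fun x _ => hderiv x)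
  have hdd : d₁ < d₂ := lt_trans hd₁.2 hd₂.1
  have hdd' : d₂ < d₃ := lt_trans hd₂.2 hd₃.1
  obtain ⟨hA, hB, hC⟩ := exp3 (show μ₂ - μ₁ < μ₃ - μ₁ by linarith)
    (show μ₃ - μ₁ < μ₄ - μ₁ by linarith) (α₂ * (μ₂ - μ₁)) (α₃ * (μ₃ - μ₁)) (α₄ * (μ₄ - μ₁)) hdd hdd'
    (by linear_combination hz₁) (by linear_combination hz₂) (by linear_combination hz₃)
  have hα₂ : α₂ = 0 := (mul_eq_zero.mp hA).resolve_right (by intro h; linarith)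
  have hα₃ : α₃ = 0 := (mul_eq_zero.mp hB).resolve_right (by intro h; linarith)
  have hα₄ : α₄ = 0 := (mul_eq_zero.mp hC).resolve_right (by intro h; linarith)
  refine ⟨?_, hα₂, hα₃, hα₄⟩
  have := gzero c₁ h1
  simp only [hgdef, hα₂, hα₃, hα₄] at this
  linarith

private lemma exp4' {μ₁ μ₂ μ₃ μ₄ : ℝ} (h12 : μ₁ < μ₂) (h23 : μ₂ < μ₃) (h34 : μ₃ < μ₄)
    (α₁ α₂ α₃ α₄ : ℝ) (c : Fin 4 → ℝ) (hc : Function.Injective c)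
    (hf : ∀ j : Fin 4, α₁ * Real.exp (μ₁ * c j) + α₂ * Real.exp (μ₂ * c j)
      + α₃ * Real.exp (μ₃ * c j) + α₄ * Real.exp (μ₄ * c j) = 0) :
    α₁ = 0 ∧ α₂ = 0 ∧ α₃ = 0 ∧ α₄ = 0 := by
  set s : Finset ℝ := Finset.image c Finset.univ with hs
  have hcard : s.card = 4 := by
    rw [hs, Finset.card_image_of_injective _ hc, Finset.card_univ, Fintype.card_fin]
  have hzero : ∀ i : Fin 4,
      α₁ * Real.exp (μ₁ * (Finset.orderEmbOfFin s hcard i))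
        + α₂ * Real.exp (μ₂ * (Finset.orderEmbOfFin s hcard i))
        + α₃ * Real.exp (μ₃ * (Finset.orderEmbOfFin s hcard i))
        + α₄ * Real.exp (μ₄ * (Finset.orderEmbOfFin s hcard i)) = 0 := by
    intro i
    obtain ⟨j, _, hj⟩ := Finset.mem_image.mp (Finset.orderEmbOfFin_mem s hcard i)
    rw [← hj]
    exact hf j
  have hmono := (Finset.orderEmbOfFin s hcard).strictMono
  exact exp4 h12 h23 h34 α₁ α₂ α₃ α₄
    (hmono (show (0 : Fin 4) < 1 by decide)) (hmono (show (1 : Fin 4) < 2 by decide))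
    (hmono (show (2 : Fin 4) < 3 by decide)) (hzero 0) (hzero 1) (hzero 2) (hzero 3)

theorem v_linearIndependent (l₁₁ l₁₂ l₂₁ l₂₂ : ℝ)
    (h₁ : 0 < l₁₁) (h₂ : 0 < l₁₂) (h₃ : 0 < l₂₁) (h₄ : 0 < l₂₂)
    (hd₁ : l₁₁ ≠ l₁₂) (hd₂ : l₁₁ ≠ l₂₁) (hd₃ : l₁₁ ≠ l₂₂)
    (hd₄ : l₁₂ ≠ l₂₁) (hd₅ : l₁₂ ≠ l₂₂) (hd₆ : l₂₁ ≠ l₂₂)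
    (a₁ a₂ a₃ : ℝ) (ha₁ : 0 < a₁) (ha₁₂ : a₁ < a₂) (ha₂₃ : a₂ < a₃) :
    LinearIndependent ℝ
      (fun i : Fin 4 =>
        (fun x : ℝ =>
          (![Real.exp (-x ^ 2 / l₁₁ ^ 2), Real.exp (-x ^ 2 / l₁₂ ^ 2),
             Real.exp (-x ^ 2 / l₂₁ ^ 2), Real.exp (-x ^ 2 / l₂₂ ^ 2)] : Fin 4 → ℝ))
          (![0, a₁, a₂, a₃] i)) := by
  have ha₂ : 0 < a₂ := ha₁.trans ha₁₂
  have ha₃ : 0 < a₃ := ha₂.trans ha₂₃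
  have key : ∀ {x y : ℝ}, 0 < x → 0 < y → x ≠ y → (1:ℝ)/x^2 ≠ 1/y^2 := by
    intro x y hx hy hxy he
    apply hxy
    have hx0 : x^2 ≠ 0 := by positivity
    have hy0 : y^2 ≠ 0 := by positivity
    field_simp at he
    nlinarith
  rw [Fintype.linearIndependent_iff]
  intro g hg
  have hj0 := congrFun hg 0
  have hj1 := congrFun hg 1
  have hj2 := congrFun hg 2
  have hj3 := congrFun hg 3
  simp only [Finset.sum_apply, Pi.smul_apply, smul_eq_mul, Pi.zero_apply, Fin.sum_univ_four,
    Matrix.cons_val_zero, Matrix.cons_val_one, Matrix.head_cons, Matrix.cons_val_two,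
    Matrix.tail_cons, Matrix.cons_val_three, Matrix.head_fin_const] at hj0 hj1 hj2 hj3
  norm_num at hj0 hj1 hj2 hj3
  have hμ1 : (-a₃^2 : ℝ) < -a₂^2 := by nlinarith
  have hμ2 : (-a₂^2 : ℝ) < -a₁^2 := by nlinarith
  have hμ3 : (-a₁^2 : ℝ) < 0 := by nlinarith
  set c : Fin 4 → ℝ := ![1/l₁₁^2, 1/l₁₂^2, 1/l₂₁^2, 1/l₂₂^2] with hcdef
  have n1 := key h₁ h₂ hd₁
  have n2 := key h₁ h₃ hd₂
  have n3 := key h₁ h₄ hd₃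
  have n4 := key h₂ h₃ hd₄
  have n5 := key h₂ h₄ hd₅
  have n6 := key h₃ h₄ hd₆
  have n1' := n1.symm
  have n2' := n2.symm
  have n3' := n3.symm
  have n4' := n4.symm
  have n5' := n5.symm
  have n6' := n6.symm
  have hcinj : Function.Injective c := by
    intro i j hij
    fin_cases i <;> fin_cases j <;>
      simp only [hcdef, Matrix.cons_val_zero, Matrix.cons_val_one, Matrix.head_cons,
        Matrix.cons_val_two, Matrix.tail_cons, Matrix.cons_val_three] at hij <;>
      first
        | rfl
        | exact absurd hij (by assumption)
  have harg : ∀ x l : ℝ, -(x^2 * (l^2)⁻¹) = -x^2/l^2 := by intro x l; ring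
  obtain ⟨e3, e2, e1, e0⟩ := exp4' hμ1 hμ2 hμ3 (g 3) (g 2) (g 1) (g 0) c hcinj (by
    intro j
    fin_cases j <;>
      simp [hcdef, mul_one_div] <;> simp only [harg] <;>
      first
        | linear_combination hj0
        | linear_combination hj1
        | linear_combination hj2
        | linear_combination hj3)
  intro i
  fin_cases i
  · exact e0
  · exact e1
  · exact e2
  · exact e3
end

section
/- Let $\sigma_1, \sigma_2, l_1, l_2 > 0$ with $l_1 < l_2$, and $\sigma_3, \sigma_4, l_3, l_4 > 0$ with $l_3 < l_4$. Suppose $X \subseteq [0, \infty)$ is a set of nonnegative reals with $|X| \geq 4$, and for all $x \in X$: $\sigma_1^2 e^{-x^2/l_1^2} + \sigma_2^2 e^{-x^2/l_2^2} = \sigma_3^2 e^{-x^2/l_3^2} + \sigma_4^2 e^{-x^2/l_4^2}$. If additionally $0 \in X$ (and $X$ contains at least three distinct positive elements), then $(\sigma_1, l_1) = (\sigma_3, l_3)$ and $(\sigma_2, l_2) = (\sigma_4, l_4)$. -/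
open Real Set

lemma E2 (c₁ c₂ μ₁ μ₂ t₁ t₂ : ℝ) (h12 : μ₁ ≠ μ₂) (ht : t₁ < t₂)
    (e1 : c₁ * exp (μ₁ * t₁) + c₂ * exp (μ₂ * t₁) = 0)
    (e2 : c₁ * exp (μ₁ * t₂) + c₂ * exp (μ₂ * t₂) = 0) :
    c₁ = 0 ∧ c₂ = 0 := by
  have hdet : exp (μ₁ * t₁) * exp (μ₂ * t₂) ≠ exp (μ₁ * t₂) * exp (μ₂ * t₁) := by
    rw [← Real.exp_add, ← Real.exp_add]
    intro h
    have := Real.exp_injective h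
    have : (μ₁ - μ₂) * (t₂ - t₁) = 0 := by linarith
    rcases mul_eq_zero.1 this with h | h
    · exact h12 (by linarith)
    · linarith
  have hc1 : c₁ * (exp (μ₁ * t₁) * exp (μ₂ * t₂) - exp (μ₁ * t₂) * exp (μ₂ * t₁)) = 0 := by
    linear_combination exp (μ₂ * t₂) * e1 - exp (μ₂ * t₁) * e2
  have hc1' : c₁ = 0 := by
    rcases mul_eq_zero.1 hc1 with h | h
    · exact h
    · exact absurd (by linarith) hdet
  refine ⟨hc1', ?_⟩
  rw [hc1'] at e1
  have := (Real.exp_pos (μ₂ * t₁)).ne'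
  rw [zero_mul, zero_add] at e1
  exact (mul_eq_zero.1 e1).resolve_right this

lemma hdCE (c m x : ℝ) : HasDerivAt (fun t => c * exp (m * t)) (c * m * exp (m * x)) x := by
  have h1 : HasDerivAt (fun t : ℝ => m * t) m x := by
    simpa using (hasDerivAt_id x).const_mul m
  have := (h1.exp).const_mul c
  rw [show c * m * exp (m * x) = c * (exp (m * x) * m) by ring]
  exact this

lemma E3 (c₁ c₂ c₃ μ₁ μ₂ μ₃ t₁ t₂ t₃ : ℝ) (h12 : μ₁ ≠ μ₂) (h13 : μ₁ ≠ μ₃) (h23 : μ₂ ≠ μ₃)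
    (ht12 : t₁ < t₂) (ht23 : t₂ < t₃)
    (e1 : c₁ * exp (μ₁ * t₁) + c₂ * exp (μ₂ * t₁) + c₃ * exp (μ₃ * t₁) = 0)
    (e2 : c₁ * exp (μ₁ * t₂) + c₂ * exp (μ₂ * t₂) + c₃ * exp (μ₃ * t₂) = 0)
    (e3 : c₁ * exp (μ₁ * t₃) + c₂ * exp (μ₂ * t₃) + c₃ * exp (μ₃ * t₃) = 0) :
    c₁ = 0 ∧ c₂ = 0 ∧ c₃ = 0 := by
  set ν₁ := μ₁ - μ₃ with hν₁
  set ν₂ := μ₂ - μ₃ with hν₂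
  set g : ℝ → ℝ := fun t => c₁ * exp (ν₁ * t) + c₂ * exp (ν₂ * t) + c₃ with hg
  set g' : ℝ → ℝ := fun t => c₁ * ν₁ * exp (ν₁ * t) + c₂ * ν₂ * exp (ν₂ * t) with hg'
  have hder : ∀ x : ℝ, HasDerivAt g (g' x) x := by
    intro x
    have := ((hdCE c₁ ν₁ x).add (hdCE c₂ ν₂ x)).add_const c₃
    simpa [g, g'] using this
  have hgz : ∀ t, c₁ * exp (μ₁ * t) + c₂ * exp (μ₂ * t) + c₃ * exp (μ₃ * t) = 0 → g t = 0 := by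
    intro t het
    have hexp : ∀ μ : ℝ, exp ((μ - μ₃) * t) = exp (μ * t) * exp (-(μ₃ * t)) := by
      intro μ; rw [← Real.exp_add]; ring_nf
    have : g t = (c₁ * exp (μ₁ * t) + c₂ * exp (μ₂ * t) + c₃ * exp (μ₃ * t)) * exp (-(μ₃ * t)) := by
      have hne : exp (μ₃ * t) ≠ 0 := (Real.exp_pos _).ne'
      simp only [g, hν₁, hν₂, sub_mul, Real.exp_sub, Real.exp_neg]
      field_simp
    rw [this, het, zero_mul]
  have hg1 := hgz t₁ e1
  have hg2 := hgz t₂ e2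
  have hg3 := hgz t₃ e3
  obtain ⟨s₁, hs₁, hgs₁⟩ := exists_hasDerivAt_eq_zero ht12
    (fun x _ => (hder x).continuousAt.continuousWithinAt) (hg1.trans hg2.symm)
    (fun x _ => hder x)
  obtain ⟨s₂, hs₂, hgs₂⟩ := exists_hasDerivAt_eq_zero ht23
    (fun x _ => (hder x).continuousAt.continuousWithinAt) (hg2.trans hg3.symm)
    (fun x _ => hder x)
  have hs : s₁ < s₂ := lt_trans hs₁.2 hs₂.1
  have hν12 : ν₁ ≠ ν₂ := fun h => h12 (by simp [hν₁, hν₂] at h; linarith)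
  obtain ⟨hc1, hc2⟩ := E2 (c₁ * ν₁) (c₂ * ν₂) ν₁ ν₂ s₁ s₂ hν12 hs hgs₁ hgs₂
  have hν₁0 : ν₁ ≠ 0 := sub_ne_zero.2 h13
  have hν₂0 : ν₂ ≠ 0 := sub_ne_zero.2 h23
  have hc1' : c₁ = 0 := by rcases mul_eq_zero.1 hc1 with h | h; exact h; exact absurd h hν₁0
  have hc2' : c₂ = 0 := by rcases mul_eq_zero.1 hc2 with h | h; exact h; exact absurd h hν₂0
  refine ⟨hc1', hc2', ?_⟩
  rw [hc1', hc2'] at e1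
  simpa [(Real.exp_pos (μ₃ * t₁)).ne'] using e1

lemma E4 (c₁ c₂ c₃ c₄ μ₁ μ₂ μ₃ μ₄ t₁ t₂ t₃ t₄ : ℝ)
    (h12 : μ₁ ≠ μ₂) (h13 : μ₁ ≠ μ₃) (h14 : μ₁ ≠ μ₄) (h23 : μ₂ ≠ μ₃) (h24 : μ₂ ≠ μ₄) (h34 : μ₃ ≠ μ₄)
    (ht12 : t₁ < t₂) (ht23 : t₂ < t₃) (ht34 : t₃ < t₄)
    (e1 : c₁ * exp (μ₁ * t₁) + c₂ * exp (μ₂ * t₁) + c₃ * exp (μ₃ * t₁) + c₄ * exp (μ₄ * t₁) = 0)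
    (e2 : c₁ * exp (μ₁ * t₂) + c₂ * exp (μ₂ * t₂) + c₃ * exp (μ₃ * t₂) + c₄ * exp (μ₄ * t₂) = 0)
    (e3 : c₁ * exp (μ₁ * t₃) + c₂ * exp (μ₂ * t₃) + c₃ * exp (μ₃ * t₃) + c₄ * exp (μ₄ * t₃) = 0)
    (e4 : c₁ * exp (μ₁ * t₄) + c₂ * exp (μ₂ * t₄) + c₃ * exp (μ₃ * t₄) + c₄ * exp (μ₄ * t₄) = 0) :
    c₁ = 0 ∧ c₂ = 0 ∧ c₃ = 0 ∧ c₄ = 0 := by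
  set ν₁ := μ₁ - μ₄ with hν₁
  set ν₂ := μ₂ - μ₄ with hν₂
  set ν₃ := μ₃ - μ₄ with hν₃
  set g : ℝ → ℝ := fun t => c₁ * exp (ν₁ * t) + c₂ * exp (ν₂ * t) + c₃ * exp (ν₃ * t) + c₄ with hg
  set g' : ℝ → ℝ := fun t =>
    c₁ * ν₁ * exp (ν₁ * t) + c₂ * ν₂ * exp (ν₂ * t) + c₃ * ν₃ * exp (ν₃ * t) with hg'
  have hder : ∀ x : ℝ, HasDerivAt g (g' x) x := by
    intro x
    have := (((hdCE c₁ ν₁ x).add (hdCE c₂ ν₂ x)).add (hdCE c₃ ν₃ x)).add_const c₄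
    simpa [g, g'] using this
  have hgz : ∀ t, c₁ * exp (μ₁ * t) + c₂ * exp (μ₂ * t) + c₃ * exp (μ₃ * t) + c₄ * exp (μ₄ * t) = 0 →
      g t = 0 := by
    intro t het
    have hne : exp (μ₄ * t) ≠ 0 := (Real.exp_pos _).ne'
    have : g t = (c₁ * exp (μ₁ * t) + c₂ * exp (μ₂ * t) + c₃ * exp (μ₃ * t) + c₄ * exp (μ₄ * t)) *
        (exp (μ₄ * t))⁻¹ := by
      simp only [g, hν₁, hν₂, hν₃, sub_mul, Real.exp_sub]
      field_simp
    rw [this, het, zero_mul]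
  have hg1 := hgz t₁ e1
  have hg2 := hgz t₂ e2
  have hg3 := hgz t₃ e3
  have hg4 := hgz t₄ e4
  obtain ⟨s₁, hs₁, hgs₁⟩ := exists_hasDerivAt_eq_zero ht12
    (fun x _ => (hder x).continuousAt.continuousWithinAt) (hg1.trans hg2.symm) (fun x _ => hder x)
  obtain ⟨s₂, hs₂, hgs₂⟩ := exists_hasDerivAt_eq_zero ht23
    (fun x _ => (hder x).continuousAt.continuousWithinAt) (hg2.trans hg3.symm) (fun x _ => hder x)
  obtain ⟨s₃, hs₃, hgs₃⟩ := exists_hasDerivAt_eq_zero ht34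
    (fun x _ => (hder x).continuousAt.continuousWithinAt) (hg3.trans hg4.symm) (fun x _ => hder x)
  have hs12 : s₁ < s₂ := lt_trans hs₁.2 hs₂.1
  have hs23 : s₂ < s₃ := lt_trans hs₂.2 hs₃.1
  have hν12 : ν₁ ≠ ν₂ := fun h => h12 (by simp only [hν₁, hν₂] at h; linarith)
  have hν13 : ν₁ ≠ ν₃ := fun h => h13 (by simp only [hν₁, hν₃] at h; linarith)
  have hν23 : ν₂ ≠ ν₃ := fun h => h23 (by simp only [hν₂, hν₃] at h; linarith)
  obtain ⟨hc1, hc2, hc3⟩ := E3 (c₁ * ν₁) (c₂ * ν₂) (c₃ * ν₃) ν₁ ν₂ ν₃ s₁ s₂ s₃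
    hν12 hν13 hν23 hs12 hs23 hgs₁ hgs₂ hgs₃
  have hν₁0 : ν₁ ≠ 0 := sub_ne_zero.2 h14
  have hν₂0 : ν₂ ≠ 0 := sub_ne_zero.2 h24
  have hν₃0 : ν₃ ≠ 0 := sub_ne_zero.2 h34
  have hc1' : c₁ = 0 := by rcases mul_eq_zero.1 hc1 with h | h; exact h; exact absurd h hν₁0
  have hc2' : c₂ = 0 := by rcases mul_eq_zero.1 hc2 with h | h; exact h; exact absurd h hν₂0
  have hc3' : c₃ = 0 := by rcases mul_eq_zero.1 hc3 with h | h; exact h; exact absurd h hν₃0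
  refine ⟨hc1', hc2', hc3', ?_⟩
  rw [hc1', hc2', hc3'] at e1
  simpa [(Real.exp_pos (μ₄ * t₁)).ne'] using e1

set_option maxHeartbeats 1000000 in
theorem two_RBF_identifiable (σ₁ σ₂ σ₃ σ₄ l₁ l₂ l₃ l₄ : ℝ)
    (hσ₁ : 0 < σ₁) (hσ₂ : 0 < σ₂) (hσ₃ : 0 < σ₃) (hσ₄ : 0 < σ₄)
    (hl₁ : 0 < l₁) (hl₂ : 0 < l₂) (hl₃ : 0 < l₃) (hl₄ : 0 < l₄)
    (h₁₂ : l₁ < l₂) (h₃₄ : l₃ < l₄)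
    (X : Set ℝ) (hX : X ⊆ Set.Ici 0) (h0 : (0 : ℝ) ∈ X)
    (hthree : ∃ a b c : ℝ, a ∈ X ∧ b ∈ X ∧ c ∈ X ∧ 0 < a ∧ a < b ∧ b < c)
    (heq : ∀ x ∈ X,
      σ₁ ^ 2 * Real.exp (-x ^ 2 / l₁ ^ 2) + σ₂ ^ 2 * Real.exp (-x ^ 2 / l₂ ^ 2) =
      σ₃ ^ 2 * Real.exp (-x ^ 2 / l₃ ^ 2) + σ₄ ^ 2 * Real.exp (-x ^ 2 / l₄ ^ 2)) :
    σ₁ = σ₃ ∧ l₁ = l₃ ∧ σ₂ = σ₄ ∧ l₂ = l₄ := by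
  obtain ⟨a, b, c, ha, hb, hc, hapos, hab, hbc⟩ := hthree
  set μ₁ : ℝ := -(l₁ ^ 2)⁻¹ with hμ₁
  set μ₂ : ℝ := -(l₂ ^ 2)⁻¹ with hμ₂
  set μ₃ : ℝ := -(l₃ ^ 2)⁻¹ with hμ₃
  set μ₄ : ℝ := -(l₄ ^ 2)⁻¹ with hμ₄
  have hμ12 : μ₁ < μ₂ := by
    rw [hμ₁, hμ₂, neg_lt_neg_iff]
    exact inv_strictAnti₀ (by positivity) (by nlinarith)
  have hμ34 : μ₃ < μ₄ := by
    rw [hμ₃, hμ₄, neg_lt_neg_iff]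
    exact inv_strictAnti₀ (by positivity) (by nlinarith)
  have key : ∀ x ∈ X,
      σ₁ ^ 2 * exp (μ₁ * x ^ 2) + σ₂ ^ 2 * exp (μ₂ * x ^ 2) +
      (-(σ₃ ^ 2)) * exp (μ₃ * x ^ 2) + (-(σ₄ ^ 2)) * exp (μ₄ * x ^ 2) = 0 := by
    intro x hx
    have h := heq x hx
    have r : ∀ l : ℝ, -x ^ 2 / l ^ 2 = (-(l ^ 2)⁻¹) * x ^ 2 := fun l => by ring
    rw [r l₁, r l₂, r l₃, r l₄] at h
    rw [hμ₁, hμ₂, hμ₃, hμ₄]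
    linarith
  have e0 := key 0 h0
  have e1 := key a ha
  have e2 := key b hb
  have e3 := key c hc
  have ht01 : (0:ℝ) ^ 2 < a ^ 2 := by
    have := pow_lt_pow_left₀ hapos (le_refl (0:ℝ)) (n := 2) (by norm_num)
    simpa using this
  have ht12 : a ^ 2 < b ^ 2 := pow_lt_pow_left₀ hab hapos.le (by norm_num)
  have ht23 : b ^ 2 < c ^ 2 := pow_lt_pow_left₀ hbc (by linarith) (by norm_num)
  have hμ12' : μ₁ ≠ μ₂ := ne_of_lt hμ12
  have hμ34' : μ₃ ≠ μ₄ := ne_of_lt hμ34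
  by_cases h13 : μ₁ = μ₃
  · by_cases h24 : μ₂ = μ₄
    · -- main case
      rw [← h13, ← h24] at e1 e2
      have f1 : (σ₁ ^ 2 - σ₃ ^ 2) * exp (μ₁ * a ^ 2) + (σ₂ ^ 2 - σ₄ ^ 2) * exp (μ₂ * a ^ 2) = 0 := by
        linear_combination e1
      have f2 : (σ₁ ^ 2 - σ₃ ^ 2) * exp (μ₁ * b ^ 2) + (σ₂ ^ 2 - σ₄ ^ 2) * exp (μ₂ * b ^ 2) = 0 := by
        linear_combination e2
      obtain ⟨g1, g2⟩ := E2 _ _ _ _ _ _ hμ12' ht12 f1 f2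
      have hs13 : σ₁ = σ₃ := (sq_eq_sq₀ hσ₁.le hσ₃.le).1 (by linarith)
      have hs24 : σ₂ = σ₄ := (sq_eq_sq₀ hσ₂.le hσ₄.le).1 (by linarith)
      have hl13 : l₁ = l₃ := by
        rw [hμ₁, hμ₃, neg_inj] at h13
        exact (sq_eq_sq₀ hl₁.le hl₃.le).1 (inv_injective h13)
      have hl24 : l₂ = l₄ := by
        rw [hμ₂, hμ₄, neg_inj] at h24
        exact (sq_eq_sq₀ hl₂.le hl₄.le).1 (inv_injective h24)
      exact ⟨hs13, hl13, hs24, hl24⟩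
    · -- μ₁ = μ₃, μ₂ ≠ μ₄ : exponents μ₁, μ₂, μ₄
      rw [← h13] at e1 e2 e3
      have h14 : μ₁ ≠ μ₄ := by rw [h13]; exact hμ34'
      have f1 : (σ₁ ^ 2 - σ₃ ^ 2) * exp (μ₁ * a ^ 2) + σ₂ ^ 2 * exp (μ₂ * a ^ 2) +
          (-(σ₄ ^ 2)) * exp (μ₄ * a ^ 2) = 0 := by linear_combination e1
      have f2 : (σ₁ ^ 2 - σ₃ ^ 2) * exp (μ₁ * b ^ 2) + σ₂ ^ 2 * exp (μ₂ * b ^ 2) +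
          (-(σ₄ ^ 2)) * exp (μ₄ * b ^ 2) = 0 := by linear_combination e2
      have f3 : (σ₁ ^ 2 - σ₃ ^ 2) * exp (μ₁ * c ^ 2) + σ₂ ^ 2 * exp (μ₂ * c ^ 2) +
          (-(σ₄ ^ 2)) * exp (μ₄ * c ^ 2) = 0 := by linear_combination e3
      obtain ⟨-, g2, -⟩ := E3 _ _ _ _ _ _ _ _ _ hμ12' h14 h24 ht12 ht23 f1 f2 f3
      exact absurd g2 (by positivity)
  · by_cases h14 : μ₁ = μ₄
    · by_cases h23 : μ₂ = μ₃
      · exfalso; rw [h14, h23] at hμ12; linarith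
      · -- μ₁ = μ₄ : exponents μ₁, μ₂, μ₃
        rw [← h14] at e1 e2 e3
        have f1 : (σ₁ ^ 2 - σ₄ ^ 2) * exp (μ₁ * a ^ 2) + σ₂ ^ 2 * exp (μ₂ * a ^ 2) +
            (-(σ₃ ^ 2)) * exp (μ₃ * a ^ 2) = 0 := by linear_combination e1
        have f2 : (σ₁ ^ 2 - σ₄ ^ 2) * exp (μ₁ * b ^ 2) + σ₂ ^ 2 * exp (μ₂ * b ^ 2) +
            (-(σ₃ ^ 2)) * exp (μ₃ * b ^ 2) = 0 := by linear_combination e2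
        have f3 : (σ₁ ^ 2 - σ₄ ^ 2) * exp (μ₁ * c ^ 2) + σ₂ ^ 2 * exp (μ₂ * c ^ 2) +
            (-(σ₃ ^ 2)) * exp (μ₃ * c ^ 2) = 0 := by linear_combination e3
        obtain ⟨-, g2, -⟩ := E3 _ _ _ _ _ _ _ _ _ hμ12' h13 h23 ht12 ht23 f1 f2 f3
        exact absurd g2 (by positivity)
    · by_cases h23 : μ₂ = μ₃
      · -- exponents μ₁, μ₂, μ₄; coefficients σ₁², σ₂²−σ₃², −σ₄²
        rw [← h23] at e1 e2 e3
        have h24 : μ₂ ≠ μ₄ := by rw [h23]; exact hμ34'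
        have f1 : σ₁ ^ 2 * exp (μ₁ * a ^ 2) + (σ₂ ^ 2 - σ₃ ^ 2) * exp (μ₂ * a ^ 2) +
            (-(σ₄ ^ 2)) * exp (μ₄ * a ^ 2) = 0 := by linear_combination e1
        have f2 : σ₁ ^ 2 * exp (μ₁ * b ^ 2) + (σ₂ ^ 2 - σ₃ ^ 2) * exp (μ₂ * b ^ 2) +
            (-(σ₄ ^ 2)) * exp (μ₄ * b ^ 2) = 0 := by linear_combination e2
        have f3 : σ₁ ^ 2 * exp (μ₁ * c ^ 2) + (σ₂ ^ 2 - σ₃ ^ 2) * exp (μ₂ * c ^ 2) +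
            (-(σ₄ ^ 2)) * exp (μ₄ * c ^ 2) = 0 := by linear_combination e3
        obtain ⟨g1, -, -⟩ := E3 _ _ _ _ _ _ _ _ _ hμ12' h14 h24 ht12 ht23 f1 f2 f3
        exact absurd g1 (by positivity)
      · by_cases h24 : μ₂ = μ₄
        · -- exponents μ₁, μ₂, μ₃; coefficients σ₁², σ₂²−σ₄², −σ₃²
          rw [← h24] at e1 e2 e3
          have f1 : σ₁ ^ 2 * exp (μ₁ * a ^ 2) + (σ₂ ^ 2 - σ₄ ^ 2) * exp (μ₂ * a ^ 2) +
              (-(σ₃ ^ 2)) * exp (μ₃ * a ^ 2) = 0 := by linear_combination e1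
          have f2 : σ₁ ^ 2 * exp (μ₁ * b ^ 2) + (σ₂ ^ 2 - σ₄ ^ 2) * exp (μ₂ * b ^ 2) +
              (-(σ₃ ^ 2)) * exp (μ₃ * b ^ 2) = 0 := by linear_combination e2
          have f3 : σ₁ ^ 2 * exp (μ₁ * c ^ 2) + (σ₂ ^ 2 - σ₄ ^ 2) * exp (μ₂ * c ^ 2) +
              (-(σ₃ ^ 2)) * exp (μ₃ * c ^ 2) = 0 := by linear_combination e3
          obtain ⟨g1, -, -⟩ := E3 _ _ _ _ _ _ _ _ _ hμ12' h13 h23 ht12 ht23 f1 f2 f3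
          exact absurd g1 (by positivity)
        · -- all distinct
          obtain ⟨g1, -, -, -⟩ := E4 _ _ _ _ _ _ _ _ ((0:ℝ)^2) (a^2) (b^2) (c^2)
            hμ12' h13 h14 h23 h24 hμ34' ht01 ht12 ht23 e0 e1 e2 e3
          exact absurd g1 (by positivity)
end

section
/- Let $p > 0$ and let $X \subseteq [0, \infty)$ be a finite set of the form $X = \{|x_i - x_j| : 1 \leq i, j \leq n\}$ for reals $x_1 < x_2 < \cdots < x_n$. Suppose there exist $\alpha, \beta \in X$ with $\alpha/p \in \mathbb{N}_{>0}$ and $\beta/p \notin \mathbb{N}$. Then there exist a positive integer $m$ and a real $q > 0$ with $q/p \notin \mathbb{N}$ such that either $\{0, mp, q, mp + q\} \subseteq X$ or $\{0, q, mp - q, mp\} \subseteq X$ (with $0 < q < mp$ in the second case). -/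
theorem exists_lag_structure (p : ℝ) (hp : 0 < p) (n : ℕ) (x : Fin n → ℝ)
    (hmono : StrictMono x) (X : Set ℝ)
    (hX : X = {d : ℝ | ∃ i j : Fin n, d = |x i - x j|})
    (α β : ℝ) (hα : α ∈ X) (hβ : β ∈ X)
    (hαp : ∃ k : ℕ, 0 < k ∧ α = k * p)
    (hβp : ¬∃ k : ℕ, β = k * p) :
    ∃ m : ℕ, 0 < m ∧ ∃ q : ℝ, 0 < q ∧ (¬∃ k : ℕ, q = k * p) ∧
      (({0, m * p, q, m * p + q} : Set ℝ) ⊆ X ∨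
        (q < m * p ∧ ({0, q, m * p - q, m * p} : Set ℝ) ⊆ X)) := by
  subst hX
  obtain ⟨k, hk, hkp⟩ := hαp
  obtain ⟨i, j, hij⟩ := hα
  obtain ⟨a, b, hab⟩ := hβ
  set M : ℝ → Prop := fun d => ∃ z : ℤ, d = z * p with hM
  have hMsub : ∀ d e, M d → M e → M (d - e) := by
    rintro d e ⟨z1, rfl⟩ ⟨z2, rfl⟩
    exact ⟨z1 - z2, by push_cast; ring⟩
  have hMneg : ∀ d, M d → M (-d) := by
    rintro d ⟨z, rfl⟩; exact ⟨-z, by push_cast; ring⟩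
  have hMα : M α := ⟨k, by exact_mod_cast hkp⟩
  have hnMβ : ¬ M β := by
    rintro ⟨z, hz⟩
    apply hβp
    have hβ0 : 0 ≤ β := hab ▸ abs_nonneg _
    have hz0 : 0 ≤ z := by
      by_contra h
      push_neg at h
      have : (z : ℝ) * p < 0 :=
        mul_neg_of_neg_of_pos (by exact_mod_cast h) hp
      linarith [hz ▸ hβ0]
    exact ⟨z.toNat, by rw [hz]; congr 1; exact_mod_cast (Int.toNat_of_nonneg hz0).symm⟩
  -- normalize the α-pair
  obtain ⟨i', j', hle, hval⟩ : ∃ i' j' : Fin n, x i' ≤ x j' ∧ x j' - x i' = α := by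
    rcases le_total (x i) (x j) with h | h
    · exact ⟨i, j, h, by rw [hij, abs_sub_comm, abs_of_nonneg (sub_nonneg.2 h)]⟩
    · exact ⟨j, i, h, by rw [hij, abs_of_nonneg (sub_nonneg.2 h)]⟩
  have hαpos : 0 < α := by
    rw [hkp]; positivity
  have huv : x i' < x j' := by linarith
  -- pick endpoint of β-pair at non-multiple distance from x i'
  obtain ⟨ic, hnu⟩ : ∃ ic : Fin n, ¬ M (x ic - x i') := by
    by_contra h
    push_neg at h
    have hM1 := h a
    have hM2 := h b
    have hMd : M (x a - x b) := by
      have := hMsub _ _ hM1 hM2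
      simpa using this
    apply hnMβ
    rcases le_total (x a) (x b) with hh | hh
    · rw [hab, abs_sub_comm, abs_of_nonneg (sub_nonneg.2 hh)]
      simpa using hMneg _ hMd
    · rw [hab, abs_of_nonneg (sub_nonneg.2 hh)]
      exact hMd
  have hnv : ¬ M (x ic - x j') := by
    intro h
    apply hnu
    have : M (x ic - x i' - α) := by
      have : x ic - x i' - α = x ic - x j' := by rw [← hval]; ring
      rw [this]; exact h
    have h2 := hMsub _ _ this (hMneg _ hMα)
    have : x ic - x i' - α - -α = x ic - x i' := by ring
    rwa [this] at h2
  have hcu : x ic ≠ x i' := by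
    intro h; exact hnu ⟨0, by rw [h]; push_cast; ring⟩
  have hcv : x ic ≠ x j' := by
    intro h; exact hnv ⟨0, by rw [h]; push_cast; ring⟩
  have hmemX : ∀ (s t : Fin n), x s ≤ x t →
      x t - x s ∈ {d : ℝ | ∃ i j : Fin n, d = |x i - x j|} := by
    intro s t h
    exact ⟨t, s, (abs_of_nonneg (sub_nonneg.2 h)).symm⟩
  have h0X : (0 : ℝ) ∈ {d : ℝ | ∃ i j : Fin n, d = |x i - x j|} :=
    ⟨i', i', by simp⟩
  have hαX : (k : ℝ) * p ∈ {d : ℝ | ∃ i j : Fin n, d = |x i - x j|} :=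
    ⟨i, j, by rw [← hkp]; exact hij⟩
  have hnnatq : ∀ q : ℝ, ¬ M q → ¬∃ k0 : ℕ, q = k0 * p := by
    rintro q hq ⟨k0, h⟩
    exact hq ⟨k0, by exact_mod_cast h⟩
  rcases lt_trichotomy (x ic) (x i') with hlt | heq | hgt
  · -- c < u : left branch, q = u - c
    refine ⟨k, hk, x i' - x ic, by linarith, ?_, Or.inl ?_⟩
    · exact hnnatq _ fun h => hnu (by simpa using hMneg _ h)
    · intro y hy
      simp only [Set.mem_insert_iff, Set.mem_singleton_iff] at hy
      rcases hy with rfl | rfl | rfl | rfl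
      · exact h0X
      · exact hαX
      · exact hmemX ic i' (le_of_lt hlt)
      · have : (k : ℝ) * p + (x i' - x ic) = x j' - x ic := by
          rw [← hkp, ← hval]; ring
        rw [this]
        exact hmemX ic j' (by linarith)
  · exact absurd heq hcu
  · rcases lt_trichotomy (x ic) (x j') with hlt2 | heq2 | hgt2
    · -- u < c < v : right branch, q = c - u
      refine ⟨k, hk, x ic - x i', by linarith, hnnatq _ hnu, Or.inr ⟨?_, ?_⟩⟩
      · rw [← hkp, ← hval]; linarith
      · intro y hy
        simp only [Set.mem_insert_iff, Set.mem_singleton_iff] at hy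
        rcases hy with rfl | rfl | rfl | rfl
        · exact h0X
        · exact hmemX i' ic (le_of_lt hgt)
        · have : (k : ℝ) * p - (x ic - x i') = x j' - x ic := by
            rw [← hkp, ← hval]; ring
          rw [this]
          exact hmemX ic j' (le_of_lt hlt2)
        · exact hαX
    · exact absurd heq2 hcv
    · -- v < c : left branch, q = c - v
      refine ⟨k, hk, x ic - x j', by linarith, hnnatq _ hnv, Or.inl ?_⟩
      intro y hy
      simp only [Set.mem_insert_iff, Set.mem_singleton_iff] at hy
      rcases hy with rfl | rfl | rfl | rfl
      · exact h0X
      · exact hαX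
      · exact hmemX j' ic (le_of_lt hgt2)
      · have : (k : ℝ) * p + (x ic - x j') = x ic - x i' := by
          rw [← hkp, ← hval]; ring
        rw [this]
        exact hmemX i' ic (le_of_lt hgt)
end

section
/- Let $p > 0$, $m \in \mathbb{N}_{>0}$, $q > 0$ with $q/p \notin \mathbb{Z}$, and let $l_1 \neq l_2$, $s_1 \neq s_2$ be positive reals. Define $v(x) = \big(\exp(-x^2/l_1^2), \exp(-x^2/l_2^2), \exp(\cos(2\pi x/p)/s_1^2), \exp(\cos(2\pi x/p)/s_2^2)\big) \in \mathbb{R}^4$. Then the four vectors $v(0), v(q), v(mp), v(mp+q)$ are linearly independent. -/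
open Real Set

lemma aux_slope {r z₁ z₂ z₃ : ℝ} (hr : 1 < r) (h3 : 0 ≤ z₃) (h31 : z₃ < z₁)
    (h32 : z₃ ≤ z₂) (h1 : z₁ < 1) (h2 : z₂ < 1) :
    (1 - z₂) * (z₁ ^ r - z₃ ^ r) < (1 - z₂ ^ r) * (z₁ - z₃) := by
  have hcvx := strictConvexOn_rpow hr
  have h1' : (0:ℝ) ≤ z₁ := le_trans h3 h31.le
  have h2' : (0:ℝ) ≤ z₂ := le_trans h3 h32
  have s1 : (z₁ ^ r - z₃ ^ r) / (z₁ - z₃) < ((1:ℝ) ^ r - z₃ ^ r) / (1 - z₃) :=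
    hcvx.secant_strict_mono (mem_Ici.2 h3) (mem_Ici.2 h1') (mem_Ici.2 zero_le_one)
      h31.ne' (by linarith : (1:ℝ) ≠ z₃) h1
  have s2 : (z₃ ^ r - (1:ℝ) ^ r) / (z₃ - 1) ≤ (z₂ ^ r - (1:ℝ) ^ r) / (z₂ - 1) :=
    hcvx.convexOn.secant_mono (mem_Ici.2 zero_le_one) (mem_Ici.2 h3) (mem_Ici.2 h2')
      (by linarith) (by linarith) h32
  rw [one_rpow] at s1 s2
  have e3 : (z₃ ^ r - 1) / (z₃ - 1) = (1 - z₃ ^ r) / (1 - z₃) := by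
    rw [← neg_div_neg_eq]; ring_nf
  have e2 : (z₂ ^ r - 1) / (z₂ - 1) = (1 - z₂ ^ r) / (1 - z₂) := by
    rw [← neg_div_neg_eq]; ring_nf
  rw [e3, e2] at s2
  have hfin : (z₁ ^ r - z₃ ^ r) / (z₁ - z₃) < (1 - z₂ ^ r) / (1 - z₂) := lt_of_lt_of_le s1 s2
  rw [div_lt_div_iff₀ (by linarith) (by linarith)] at hfin
  nlinarith [hfin]

lemma aux_exp {l₁ l₂ u₁ u₂ u₃ : ℝ} (hl₂ : 0 < l₂) (hl : l₂ < l₁)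
    (hu₁ : 0 < u₁) (hu₂ : 0 < u₂) (h13 : u₁ < u₃) (h23 : u₂ ≤ u₃) :
    (1 - Real.exp (-u₂ / l₁ ^ 2)) * (Real.exp (-u₁ / l₂ ^ 2) - Real.exp (-u₃ / l₂ ^ 2)) <
      (1 - Real.exp (-u₂ / l₂ ^ 2)) * (Real.exp (-u₁ / l₁ ^ 2) - Real.exp (-u₃ / l₁ ^ 2)) := by
  have hl₁ : 0 < l₁ := hl₂.trans hl
  have hr : 1 < l₁ ^ 2 / l₂ ^ 2 := by
    rw [lt_div_iff₀ (by positivity)]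
    nlinarith
  have key : ∀ u : ℝ, Real.exp (-u / l₁ ^ 2) ^ (l₁ ^ 2 / l₂ ^ 2) = Real.exp (-u / l₂ ^ 2) := by
    intro u
    rw [← Real.exp_mul]
    congr 1
    field_simp
  rw [← key u₁, ← key u₂, ← key u₃]
  have hu₃ : 0 < u₃ := hu₁.trans h13
  apply aux_slope hr (Real.exp_pos _).le
  · exact Real.exp_lt_exp.2 ((div_lt_div_iff_of_pos_right (by positivity)).2 (by linarith))
  · exact Real.exp_le_exp.2 (div_le_div_of_nonneg_right (by linarith) (by positivity) |>.trans_eq rfl)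
  · exact Real.exp_lt_one_iff.2 (div_neg_of_neg_of_pos (by linarith) (by positivity))
  · exact Real.exp_lt_one_iff.2 (div_neg_of_neg_of_pos (by linarith) (by positivity))

set_option maxHeartbeats 1000000 in
theorem mixed_vectors_linearIndependent (p : ℝ) (hp : 0 < p) (m : ℕ) (hm : 0 < m)
    (q : ℝ) (hq : 0 < q) (hqp : ¬∃ k : ℤ, q = k * p)
    (l₁ l₂ s₁ s₂ : ℝ) (hl₁ : 0 < l₁) (hl₂ : 0 < l₂) (hs₁ : 0 < s₁) (hs₂ : 0 < s₂)
    (hl : l₁ ≠ l₂) (hs : s₁ ≠ s₂) :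
    LinearIndependent ℝ
      (fun i : Fin 4 =>
        (fun x : ℝ =>
          (![Real.exp (-x ^ 2 / l₁ ^ 2), Real.exp (-x ^ 2 / l₂ ^ 2),
             Real.exp (Real.cos (2 * Real.pi * x / p) / s₁ ^ 2),
             Real.exp (Real.cos (2 * Real.pi * x / p) / s₂ ^ 2)] : Fin 4 → ℝ))
          (![0, q, m * p, m * p + q] i)) := by
  rw [Fintype.linearIndependent_iff]
  intro g hg
  have e0 := congrFun hg 0
  have e1 := congrFun hg 1
  have e2 := congrFun hg 2
  have e3 := congrFun hg 3
  simp [Fin.sum_univ_four] at e0 e1 e2 e3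
  have hπ := Real.pi_pos
  have hp' : p ≠ 0 := ne_of_gt hp
  have hm' : (0:ℝ) < (m:ℝ) := by exact_mod_cast hm
  have hcos_mp : Real.cos (2 * π * (↑m * p) / p) = 1 := by
    have h : 2 * π * ((m:ℝ) * p) / p = (m:ℝ) * (2 * π) := by field_simp
    rw [h, Real.cos_nat_mul_two_pi]
  have hcos_mpq : Real.cos (2 * π * (↑m * p + q) / p) = Real.cos (2 * π * q / p) := by
    have h : 2 * π * ((m:ℝ) * p + q) / p = 2 * π * q / p + ((m : ℤ) : ℝ) * (2 * π) := by
      push_cast; field_simp; ring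
    rw [h, Real.cos_add_int_mul_two_pi]
  rw [hcos_mp, hcos_mpq] at e2 e3
  simp only [one_div] at e2 e3
  set c := Real.cos (2 * π * q / p) with hcdef
  have hc1 : c ≠ 1 := by
    intro h
    rw [hcdef] at h
    rcases (Real.cos_eq_one_iff _).1 h with ⟨n, hn⟩
    apply hqp
    refine ⟨n, ?_⟩
    have h2π : (2:ℝ) * π ≠ 0 := by positivity
    have h1 := congrArg (fun x : ℝ => x * p) hn
    rw [div_mul_cancel₀ _ hp'] at h1
    have h2 : (2*π) * ((n:ℝ) * p) = (2*π) * q := by linear_combination h1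
    exact (mul_left_cancel₀ h2π h2).symm
  have hss : s₁^2 ≠ s₂^2 := by
    intro h
    have h4 : (s₁ - s₂) * (s₁ + s₂) = 0 := by linear_combination h
    rcases mul_eq_zero.1 h4 with h5 | h5
    · exact hs (by linarith)
    · linarith
  have hdet : rexp (s₁ ^ 2)⁻¹ * rexp (c / s₂ ^ 2) - rexp (c / s₁ ^ 2) * rexp (s₂ ^ 2)⁻¹ ≠ 0 := by
    intro h
    have h1 : rexp ((s₁ ^ 2)⁻¹ + c / s₂ ^ 2) = rexp (c / s₁ ^ 2 + (s₂ ^ 2)⁻¹) := by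
      rw [Real.exp_add, Real.exp_add]; linarith
    have h2 := Real.exp_injective h1
    have h3 : (c - 1) * (s₁^2 - s₂^2) = 0 := by
      have hs₁' : s₁ ≠ 0 := ne_of_gt hs₁
      have hs₂' : s₂ ≠ 0 := ne_of_gt hs₂
      field_simp at h2
      linear_combination h2
    rcases mul_eq_zero.1 h3 with h5 | h5
    · exact hc1 (by linarith)
    · exact hss (by linarith)
  have hS : g 0 + g 2 = 0 := by
    have hD : (g 0 + g 2) * (rexp (s₁ ^ 2)⁻¹ * rexp (c / s₂ ^ 2)
        - rexp (c / s₁ ^ 2) * rexp (s₂ ^ 2)⁻¹) = 0 := by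
      linear_combination rexp (c / s₂ ^ 2) * e2 - rexp (c / s₁ ^ 2) * e3
    exact (mul_eq_zero.1 hD).resolve_right hdet
  have hT : g 1 + g 3 = 0 := by
    have h : (g 1 + g 3) * rexp (c / s₁ ^ 2) = 0 := by
      linear_combination e2 - rexp (s₁ ^ 2)⁻¹ * hS
    exact (mul_eq_zero.1 h).resolve_right (Real.exp_ne_zero _)
  have hu₁ : (0:ℝ) < q^2 := by positivity
  have hmp : (0:ℝ) < (m:ℝ) * p := mul_pos hm' hp
  have hu₂ : (0:ℝ) < ((m:ℝ)*p)^2 := by positivity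
  have h13 : q^2 < ((m:ℝ)*p + q)^2 := by nlinarith
  have h23 : ((m:ℝ)*p)^2 ≤ ((m:ℝ)*p + q)^2 := by nlinarith
  have hE0 : g 0 * (1 - rexp (-((m:ℝ) * p) ^ 2 / l₁ ^ 2))
      + g 1 * (rexp (-q ^ 2 / l₁ ^ 2) - rexp (-((m:ℝ) * p + q) ^ 2 / l₁ ^ 2)) = 0 := by
    linear_combination e0 - rexp (-((m:ℝ) * p) ^ 2 / l₁ ^ 2) * hS
      - rexp (-((m:ℝ) * p + q) ^ 2 / l₁ ^ 2) * hT
  have hE1 : g 0 * (1 - rexp (-((m:ℝ) * p) ^ 2 / l₂ ^ 2))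
      + g 1 * (rexp (-q ^ 2 / l₂ ^ 2) - rexp (-((m:ℝ) * p + q) ^ 2 / l₂ ^ 2)) = 0 := by
    linear_combination e1 - rexp (-((m:ℝ) * p) ^ 2 / l₂ ^ 2) * hS
      - rexp (-((m:ℝ) * p + q) ^ 2 / l₂ ^ 2) * hT
  have hDne : (1 - rexp (-((m:ℝ)*p)^2/l₁^2)) * (rexp (-q^2/l₂^2) - rexp (-((m:ℝ)*p+q)^2/l₂^2))
      - (1 - rexp (-((m:ℝ)*p)^2/l₂^2)) * (rexp (-q^2/l₁^2) - rexp (-((m:ℝ)*p+q)^2/l₁^2)) ≠ 0 := by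
    rcases hl.lt_or_gt with h | h
    · have := aux_exp hl₁ h hu₁ hu₂ h13 h23
      exact ne_of_gt (by linarith)
    · have := aux_exp hl₂ h hu₁ hu₂ h13 h23
      exact ne_of_lt (by linarith)
  have hg0 : g 0 = 0 := by
    have h : g 0 * ((1 - rexp (-((m:ℝ)*p)^2/l₁^2)) * (rexp (-q^2/l₂^2) - rexp (-((m:ℝ)*p+q)^2/l₂^2))
        - (1 - rexp (-((m:ℝ)*p)^2/l₂^2)) * (rexp (-q^2/l₁^2) - rexp (-((m:ℝ)*p+q)^2/l₁^2))) = 0 := by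
      linear_combination (rexp (-q^2/l₂^2) - rexp (-((m:ℝ)*p+q)^2/l₂^2)) * hE0
        - (rexp (-q^2/l₁^2) - rexp (-((m:ℝ)*p+q)^2/l₁^2)) * hE1
    exact (mul_eq_zero.1 h).resolve_right hDne
  have hg1 : g 1 = 0 := by
    have hx : rexp (-((m:ℝ)*p+q)^2/l₁^2) < rexp (-q^2/l₁^2) :=
      Real.exp_lt_exp.2 ((div_lt_div_iff_of_pos_right (by positivity)).2 (by linarith))
    have h : g 1 * (rexp (-q^2/l₁^2) - rexp (-((m:ℝ)*p+q)^2/l₁^2)) = 0 := by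
      linear_combination hE0 - (1 - rexp (-((m:ℝ)*p)^2/l₁^2)) * hg0
    exact (mul_eq_zero.1 h).resolve_right (sub_ne_zero.2 hx.ne')
  have hg2 : g 2 = 0 := by linarith
  have hg3 : g 3 = 0 := by linarith
  intro i
  fin_cases i <;> assumption
end

section
/- Let $p, m, q, l_1, l_2$ be as follows: $p > 0$, $m$ a positive integer, $q > 0$, and $l_1, l_2 > 0$ with $l_1 \neq l_2$. Then the $2 \times 2$ matrix $B = \begin{pmatrix} e^{-m^2p^2/l_1^2} - 1 & e^{-(mp+q)^2/l_1^2} - e^{-q^2/l_1^2} \\ e^{-m^2p^2/l_2^2} - 1 & e^{-(mp+q)^2/l_2^2} - e^{-q^2/l_2^2} \end{pmatrix}$ satisfies $\det B \neq 0$. -/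
open Real Set

lemma key_convex {a d s : ℝ} (ha : 0 < a) (had : a ≤ d) (hs : 0 < s) :
    d * (Real.exp (a*s) - 1) ≤ a * (Real.exp (d*s) - 1) := by
  have hd : 0 < d := lt_of_lt_of_le ha had
  have hθ0 : (0:ℝ) ≤ a/d := by positivity
  have hθ1 : (0:ℝ) ≤ 1 - a/d := by
    have : a/d ≤ 1 := by rw [div_le_one hd]; exact had
    linarith
  have h := convexOn_exp.2 (mem_univ (0:ℝ)) (mem_univ (d*s)) hθ1 hθ0 (by ring)
  simp only [smul_eq_mul] at h
  have harg : (1 - a/d) * (0:ℝ) + (a/d) * (d*s) = a*s := by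
    field_simp; ring
  rw [harg, Real.exp_zero] at h
  have h2 := mul_le_mul_of_nonneg_left h (le_of_lt hd)
  have hexp : d * ((1 - a/d) * 1 + (a/d) * Real.exp (d*s)) = d - a + a * Real.exp (d*s) := by
    field_simp
  nlinarith [h2]

lemma key2 {a d s : ℝ} (ha : 0 < a) (had : a ≤ d) (hs : 0 < s) :
    d * Real.exp (-(d*s)) * (1 - Real.exp (-(a*s))) ≤
      a * Real.exp (-(a*s)) * (1 - Real.exp (-(d*s))) := by
  have hX : 0 < Real.exp (a*s) := Real.exp_pos _
  have hY : 0 < Real.exp (d*s) := Real.exp_pos _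
  have h1 := key_convex ha had hs
  rw [Real.exp_neg, Real.exp_neg]
  rw [show (Real.exp (a*s))⁻¹ = 1 / Real.exp (a*s) from inv_eq_one_div _,
      show (Real.exp (d*s))⁻¹ = 1 / Real.exp (d*s) from inv_eq_one_div _]
  field_simp
  rw [mul_comm s a]
  exact h1

noncomputable def Fk (a c d : ℝ) : ℝ → ℝ :=
  fun s => Real.exp (-(c*s)) * (1 - Real.exp (-(d*s))) / (1 - Real.exp (-(a*s)))

lemma exp_neg_lt_one {k s : ℝ} (hk : 0 < k) (hs : 0 < s) : Real.exp (-(k*s)) < 1 := by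
  have : -(k*s) < 0 := by nlinarith
  simpa using Real.exp_lt_exp.mpr this

lemma hasDerivAt_Fk {a c d : ℝ} (ha : 0 < a) {s : ℝ} (hs : 0 < s) :
    HasDerivAt (Fk a c d)
      (((Real.exp (-(c*s)) * (-c) * (1 - Real.exp (-(d*s))) +
          Real.exp (-(c*s)) * (-(Real.exp (-(d*s)) * (-d)))) * (1 - Real.exp (-(a*s))) -
        Real.exp (-(c*s)) * (1 - Real.exp (-(d*s))) * (-(Real.exp (-(a*s)) * (-a)))) /
        (1 - Real.exp (-(a*s)))^2) s := by
  have hlin : ∀ k : ℝ, HasDerivAt (fun t : ℝ => -(k*t)) (-k) s := by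
    intro k
    have h := ((hasDerivAt_id s).const_mul k).neg
    rw [mul_one] at h
    exact h
  have hec : HasDerivAt (fun t => Real.exp (-(c*t))) (Real.exp (-(c*s)) * (-c)) s :=
    (hlin c).exp
  have hnd : HasDerivAt (fun t => 1 - Real.exp (-(d*t))) (-(Real.exp (-(d*s)) * (-d))) s :=
    ((hlin d).exp).const_sub 1
  have hden : HasDerivAt (fun t => 1 - Real.exp (-(a*t))) (-(Real.exp (-(a*s)) * (-a))) s :=
    ((hlin a).exp).const_sub 1
  have hne : 1 - Real.exp (-(a*s)) ≠ 0 := by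
    have := exp_neg_lt_one ha hs
    linarith
  exact (hec.mul hnd).div hden hne

lemma Fk_strictAntiOn {a c d : ℝ} (ha : 0 < a) (hc : 0 < c) (had : a ≤ d) :
    StrictAntiOn (Fk a c d) (Ioi 0) := by
  apply strictAntiOn_of_deriv_neg (convex_Ioi 0)
  · exact fun s hs => (hasDerivAt_Fk ha hs).continuousAt.continuousWithinAt
  · intro s hs
    rw [interior_Ioi] at hs
    rw [(hasDerivAt_Fk ha hs).deriv]
    have hA : Real.exp (-(a*s)) < 1 := exp_neg_lt_one ha hs
    have hD : Real.exp (-(d*s)) < 1 := exp_neg_lt_one (lt_of_lt_of_le ha had) hs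
    have hC : 0 < Real.exp (-(c*s)) := Real.exp_pos _
    have hk := key2 ha had hs
    have hk2 := mul_le_mul_of_nonneg_left hk (le_of_lt hC)
    have hpos : 0 < c * (Real.exp (-(c*s)) * ((1 - Real.exp (-(d*s))) * (1 - Real.exp (-(a*s))))) := by
      have h1 : 0 < 1 - Real.exp (-(d*s)) := by linarith
      have h2 : 0 < 1 - Real.exp (-(a*s)) := by linarith
      positivity
    apply div_neg_of_neg_of_pos
    · nlinarith [hk2, hpos]
    · have h2 : 0 < 1 - Real.exp (-(a*s)) := by linarith
      positivity

theorem detB2_ne_zero (p : ℝ) (hp : 0 < p) (m : ℕ) (hm : 0 < m) (q : ℝ) (hq : 0 < q)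
    (l₁ l₂ : ℝ) (hl₁ : 0 < l₁) (hl₂ : 0 < l₂) (hl : l₁ ≠ l₂) :
    Matrix.det
      !![Real.exp (-(m : ℝ) ^ 2 * p ^ 2 / l₁ ^ 2) - 1,
           Real.exp (-(m * p + q) ^ 2 / l₁ ^ 2) - Real.exp (-q ^ 2 / l₁ ^ 2);
         Real.exp (-(m : ℝ) ^ 2 * p ^ 2 / l₂ ^ 2) - 1,
           Real.exp (-(m * p + q) ^ 2 / l₂ ^ 2) - Real.exp (-q ^ 2 / l₂ ^ 2)] ≠ 0 := by
  have hm' : (0:ℝ) < (m:ℝ) := Nat.cast_pos.mpr hm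
  have hmp : 0 < (m:ℝ) * p := mul_pos hm' hp
  set a := ((m:ℝ)*p)^2 with ha_def
  set c := q^2 with hc_def
  set d := ((m:ℝ)*p + q)^2 - q^2 with hd_def
  have ha : 0 < a := by positivity
  have hc : 0 < c := by positivity
  have had : a ≤ d := by rw [ha_def, hd_def]; nlinarith
  set s₁ := 1/l₁^2 with hs₁_def
  set s₂ := 1/l₂^2 with hs₂_def
  have hs₁ : s₁ ∈ Ioi (0:ℝ) := by rw [hs₁_def]; simp only [mem_Ioi]; positivity
  have hs₂ : s₂ ∈ Ioi (0:ℝ) := by rw [hs₂_def]; simp only [mem_Ioi]; positivity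
  have hl₁0 : l₁ ≠ 0 := ne_of_gt hl₁
  have hl₂0 : l₂ ≠ 0 := ne_of_gt hl₂
  have e11 : -(m:ℝ)^2 * p^2 / l₁^2 = -(a*s₁) := by
    rw [ha_def, hs₁_def]; field_simp
  have e21 : -(m:ℝ)^2 * p^2 / l₂^2 = -(a*s₂) := by
    rw [ha_def, hs₂_def]; field_simp
  have e12 : Real.exp (-((m:ℝ) * p + q)^2 / l₁^2) - Real.exp (-q^2 / l₁^2)
      = -(Real.exp (-(c*s₁)) * (1 - Real.exp (-(d*s₁)))) := by
    rw [show -((m:ℝ)*p+q)^2/l₁^2 = -(c*s₁) + -(d*s₁) by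
          rw [hc_def, hd_def, hs₁_def]; field_simp; ring,
        Real.exp_add,
        show -q^2/l₁^2 = -(c*s₁) by rw [hc_def, hs₁_def]; field_simp]
    ring
  have e22 : Real.exp (-((m:ℝ) * p + q)^2 / l₂^2) - Real.exp (-q^2 / l₂^2)
      = -(Real.exp (-(c*s₂)) * (1 - Real.exp (-(d*s₂)))) := by
    rw [show -((m:ℝ)*p+q)^2/l₂^2 = -(c*s₂) + -(d*s₂) by
          rw [hc_def, hd_def, hs₂_def]; field_simp; ring,
        Real.exp_add,
        show -q^2/l₂^2 = -(c*s₂) by rw [hc_def, hs₂_def]; field_simp]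
    ring
  rw [Matrix.det_fin_two_of, e11, e21, e12, e22]
  intro h
  have hne₁ : 1 - Real.exp (-(a*s₁)) ≠ 0 := by
    have := exp_neg_lt_one ha hs₁; linarith
  have hne₂ : 1 - Real.exp (-(a*s₂)) ≠ 0 := by
    have := exp_neg_lt_one ha hs₂; linarith
  have hFeq : Fk a c d s₁ = Fk a c d s₂ := by
    unfold Fk
    rw [div_eq_div_iff hne₁ hne₂]
    linear_combination -h
  have hss : s₁ = s₂ := (Fk_strictAntiOn ha hc had).injOn hs₁ hs₂ hFeq
  rw [hs₁_def, hs₂_def] at hss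
  have hsq : l₁^2 = l₂^2 := by
    field_simp at hss
    nlinarith [hss]
  have h0 : (l₁ - l₂) * (l₁ + l₂) = 0 := by linear_combination hsq
  rcases mul_eq_zero.mp h0 with h' | h'
  · exact hl (by linarith)
  · linarith
end

section
/- Let $p, l_1, l_2, s_1 > 0$ with $l_1 \neq l_2$, let $m$ be a positive integer, and $q > 0$ with $q/p \notin \mathbb{Z}$. Define $u(x) = \big(\exp(-x^2/l_1^2), \exp(-x^2/l_2^2), \exp(\cos(2\pi x/p)/s_1^2)\big) \in \mathbb{R}^3$. Then there exist no real numbers $\sigma_1, \sigma_2 > 0$ and $c \in \mathbb{R}$ such that $\sigma_1^2 \exp(-x^2/l_1^2) + c \exp(\cos(2\pi x/p)/s_1^2) = \sigma_2^2 \exp(-x^2/l_2^2)$ holds simultaneously for $x \in \{0, q, mp, mp+q\}$. -/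
open Real

private lemma slope_exp {u v : ℝ} (hu : 0 < u) (huv : u < v) :
    (Real.exp u - 1) * v < (Real.exp v - 1) * u := by
  have hv : 0 < v := hu.trans huv
  have h := strictConvexOn_exp.secant_strict_mono (Set.mem_univ (0:ℝ)) (Set.mem_univ u)
      (Set.mem_univ v) hu.ne' hv.ne' huv
  simp only [Real.exp_zero, sub_zero] at h
  rwa [div_lt_div_iff₀ hu hv] at h

private lemma num_neg {γ δ x : ℝ} (hγ : 0 < γ) (hγδ : γ < δ) (hx : 0 < x) :
    δ * Real.exp (-δ * x) * (1 - Real.exp (-γ * x)) -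
      (1 - Real.exp (-δ * x)) * (γ * Real.exp (-γ * x)) < 0 := by
  have hgx : 0 < γ * x := mul_pos hγ hx
  have hdx : γ * x < δ * x := by nlinarith
  have h := slope_exp hgx hdx
  -- h : (exp (γ x) - 1) * (δ x) < (exp (δ x) - 1) * (γ x)
  have h1 : δ * (Real.exp (γ * x) - 1) < γ * (Real.exp (δ * x) - 1) := by
    nlinarith [h, hx]
  have hA : Real.exp (-δ * x) * Real.exp (δ * x) = 1 := by
    rw [← Real.exp_add]; ring_nf; exact Real.exp_zero
  have hB : Real.exp (-γ * x) * Real.exp (γ * x) = 1 := by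
    rw [← Real.exp_add]; ring_nf; exact Real.exp_zero
  have hApos := Real.exp_pos (-δ * x)
  have hBpos := Real.exp_pos (-γ * x)
  have key := mul_lt_mul_of_pos_right h1 (mul_pos hApos hBpos)
  have eA : Real.exp (γ * x) * (Real.exp (-δ * x) * Real.exp (-γ * x)) = Real.exp (-δ * x) := by
    rw [← Real.exp_add, ← Real.exp_add]; congr 1; ring
  have eB : Real.exp (δ * x) * (Real.exp (-δ * x) * Real.exp (-γ * x)) = Real.exp (-γ * x) := by
    rw [← Real.exp_add, ← Real.exp_add]; congr 1; ring
  nlinarith [key, eA, eB]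

private lemma psi_anti {γ δ : ℝ} (hγ : 0 < γ) (hγδ : γ < δ) :
    StrictAntiOn (fun t : ℝ => (1 - Real.exp (-δ * t)) / (1 - Real.exp (-γ * t)))
      (Set.Ioi (0:ℝ)) := by
  have hδ : 0 < δ := hγ.trans hγδ
  have hden : ∀ x ∈ Set.Ioi (0:ℝ), 0 < 1 - Real.exp (-γ * x) := by
    intro x hx
    have : Real.exp (-γ * x) < Real.exp 0 := Real.exp_lt_exp.mpr (by nlinarith [hx.out])
    simpa [Real.exp_zero] using this
  apply strictAntiOn_of_deriv_neg (convex_Ioi 0)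
  · exact ContinuousOn.div (by fun_prop) (by fun_prop)
      (fun x hx => (hden x hx).ne')
  · intro x hx
    rw [interior_Ioi] at hx
    have hxp : (0:ℝ) < x := hx
    have hf : HasDerivAt (fun t : ℝ => 1 - Real.exp (-δ * t)) (δ * Real.exp (-δ * x)) x := by
      have h0 : HasDerivAt (fun t : ℝ => -δ * t) (-δ) x := by
        simpa using (hasDerivAt_id x).const_mul (-δ)
      have := (h0.exp).const_sub 1
      exact this.congr_deriv (by ring)
    have hg : HasDerivAt (fun t : ℝ => 1 - Real.exp (-γ * t)) (γ * Real.exp (-γ * x)) x := by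
      have h0 : HasDerivAt (fun t : ℝ => -γ * t) (-γ) x := by
        simpa using (hasDerivAt_id x).const_mul (-γ)
      have := (h0.exp).const_sub 1
      exact this.congr_deriv (by ring)
    have hgne : 1 - Real.exp (-γ * x) ≠ 0 := (hden x hx).ne'
    have hd := (hf.div hg hgne).deriv
    erw [hd]
    apply div_neg_of_neg_of_pos
    · exact num_neg hγ hγδ hxp
    · positivity

private lemma key_ineq_s18 {γ δ α t₂ t₁ : ℝ} (hγ : 0 < γ) (hγδ : γ < δ) (hα : 0 < α)
    (h2 : 0 < t₂) (h12 : t₂ < t₁) :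
    Real.exp (-α * t₁) * (1 - Real.exp (-δ * t₁)) * (1 - Real.exp (-γ * t₂)) <
      Real.exp (-α * t₂) * (1 - Real.exp (-δ * t₂)) * (1 - Real.exp (-γ * t₁)) := by
  have h1t : (0:ℝ) < t₁ := h2.trans h12
  have hden : ∀ x : ℝ, 0 < x → 0 < 1 - Real.exp (-γ * x) := by
    intro x hx
    have : Real.exp (-γ * x) < Real.exp 0 := Real.exp_lt_exp.mpr (by nlinarith)
    simpa [Real.exp_zero] using this
  have hdenδ : ∀ x : ℝ, 0 < x → 0 < 1 - Real.exp (-δ * x) := by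
    intro x hx
    have : Real.exp (-δ * x) < Real.exp 0 :=
      Real.exp_lt_exp.mpr (by nlinarith [hγ.trans hγδ])
    simpa [Real.exp_zero] using this
  have h := psi_anti hγ hγδ (Set.mem_Ioi.mpr h2) (Set.mem_Ioi.mpr h1t) h12
  simp only at h
  rw [div_lt_div_iff₀ (hden t₁ h1t) (hden t₂ h2)] at h
  have hexp : Real.exp (-α * t₁) < Real.exp (-α * t₂) :=
    Real.exp_lt_exp.mpr (by nlinarith)
  have := mul_lt_mul'' hexp h (Real.exp_pos _).le
    (mul_pos (hdenδ t₁ h1t) (hden t₂ h2)).le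
  calc Real.exp (-α * t₁) * (1 - Real.exp (-δ * t₁)) * (1 - Real.exp (-γ * t₂))
      = Real.exp (-α * t₁) * ((1 - Real.exp (-δ * t₁)) * (1 - Real.exp (-γ * t₂))) := by ring
    _ < Real.exp (-α * t₂) * ((1 - Real.exp (-δ * t₂)) * (1 - Real.exp (-γ * t₁))) := this
    _ = Real.exp (-α * t₂) * (1 - Real.exp (-δ * t₂)) * (1 - Real.exp (-γ * t₁)) := by ring

set_option maxHeartbeats 1000000 in
theorem no_linear_relation (p l₁ l₂ s₁ : ℝ) (hp : 0 < p) (hl₁ : 0 < l₁) (hl₂ : 0 < l₂)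
    (hs₁ : 0 < s₁) (hl : l₁ ≠ l₂) (m : ℕ) (hm : 0 < m) (q : ℝ) (hq : 0 < q)
    (hqp : ¬∃ k : ℤ, q = k * p) :
    ¬∃ (σ₁ σ₂ c : ℝ), 0 < σ₁ ∧ 0 < σ₂ ∧
      ∀ x ∈ ({0, q, m * p, m * p + q} : Set ℝ),
        σ₁ ^ 2 * Real.exp (-x ^ 2 / l₁ ^ 2) +
            c * Real.exp (Real.cos (2 * Real.pi * x / p) / s₁ ^ 2) =
          σ₂ ^ 2 * Real.exp (-x ^ 2 / l₂ ^ 2) := by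
  rintro ⟨σ₁, σ₂, c, hσ₁, hσ₂, h⟩
  have hA : (0:ℝ) < σ₁ ^ 2 := by positivity
  have hB : (0:ℝ) < σ₂ ^ 2 := by positivity
  -- the four equations
  have e0 := h 0 (by simp)
  have e1 := h q (by simp)
  have e2 := h (m * p) (by simp)
  have e3 := h (m * p + q) (by simp)
  clear h
  obtain ⟨M, hM⟩ : ∃ M : ℝ, M = (m : ℝ) * p := ⟨_, rfl⟩
  obtain ⟨t₁, ht₁⟩ : ∃ t : ℝ, t = 1 / l₁ ^ 2 := ⟨_, rfl⟩
  obtain ⟨t₂, ht₂⟩ : ∃ t : ℝ, t = 1 / l₂ ^ 2 := ⟨_, rfl⟩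
  obtain ⟨δ, hδ⟩ : ∃ d : ℝ, d = M ^ 2 + 2 * M * q := ⟨_, rfl⟩
  have hMpos : 0 < M := by
    have h0 : (0:ℝ) < (m:ℝ) := by exact_mod_cast hm
    rw [hM]; exact mul_pos h0 hp
  have ht₁p : 0 < t₁ := by rw [ht₁]; positivity
  have ht₂p : 0 < t₂ := by rw [ht₂]; positivity
  have htne : t₁ ≠ t₂ := by
    intro hEq
    apply hl
    rw [ht₁, ht₂] at hEq
    field_simp at hEq
    exact (pow_left_inj₀ hl₁.le hl₂.le two_ne_zero).mp hEq.symm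
  -- simplify cosines
  have hc0 : 2 * π * 0 / p = (0:ℝ) := by ring
  have hc2 : 2 * π * ((m:ℝ) * p) / p = (m : ℝ) * (2 * π) := by
    field_simp
  have hc3 : 2 * π * ((m:ℝ) * p + q) / p = 2 * π * q / p + (m : ℝ) * (2 * π) := by
    field_simp; ring
  rw [hc0, Real.cos_zero] at e0
  rw [hc2, Real.cos_nat_mul_two_pi] at e2
  rw [hc3, Real.cos_add_nat_mul_two_pi] at e3
  -- rewrite exponents in canonical form
  have r0a : -(0:ℝ) ^ 2 / l₁ ^ 2 = 0 := by ring
  have r0b : -(0:ℝ) ^ 2 / l₂ ^ 2 = 0 := by ring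
  have r1a : -q ^ 2 / l₁ ^ 2 = -q ^ 2 * t₁ := by rw [ht₁]; ring
  have r1b : -q ^ 2 / l₂ ^ 2 = -q ^ 2 * t₂ := by rw [ht₂]; ring
  have r2a : -((m:ℝ) * p) ^ 2 / l₁ ^ 2 = -M ^ 2 * t₁ := by rw [ht₁, hM]; ring
  have r2b : -((m:ℝ) * p) ^ 2 / l₂ ^ 2 = -M ^ 2 * t₂ := by rw [ht₂, hM]; ring
  have r3a : -((m:ℝ) * p + q) ^ 2 / l₁ ^ 2 = -q ^ 2 * t₁ + -δ * t₁ := by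
    rw [ht₁, hδ, hM]; ring
  have r3b : -((m:ℝ) * p + q) ^ 2 / l₂ ^ 2 = -q ^ 2 * t₂ + -δ * t₂ := by
    rw [ht₂, hδ, hM]; ring
  rw [r0a, r0b, Real.exp_zero, mul_one, mul_one] at e0
  rw [r1a, r1b] at e1
  rw [r2a, r2b] at e2
  rw [r3a, r3b, Real.exp_add, Real.exp_add] at e3
  -- derive the two linear relations
  have EqI : σ₁ ^ 2 * (1 - Real.exp (-M ^ 2 * t₁)) = σ₂ ^ 2 * (1 - Real.exp (-M ^ 2 * t₂)) := by
    linarith [e0, e2]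
  have EqII : σ₁ ^ 2 * (Real.exp (-q ^ 2 * t₁) * (1 - Real.exp (-δ * t₁))) =
      σ₂ ^ 2 * (Real.exp (-q ^ 2 * t₂) * (1 - Real.exp (-δ * t₂))) := by
    linarith [e1, e3]
  have step : σ₁ ^ 2 * (Real.exp (-q ^ 2 * t₁) * (1 - Real.exp (-δ * t₁))) *
        (1 - Real.exp (-M ^ 2 * t₂)) =
      σ₁ ^ 2 * (Real.exp (-q ^ 2 * t₂) * (1 - Real.exp (-δ * t₂))) *
        (1 - Real.exp (-M ^ 2 * t₁)) := by
    calc σ₁ ^ 2 * (Real.exp (-q ^ 2 * t₁) * (1 - Real.exp (-δ * t₁))) *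
          (1 - Real.exp (-M ^ 2 * t₂))
        = σ₂ ^ 2 * (Real.exp (-q ^ 2 * t₂) * (1 - Real.exp (-δ * t₂))) *
          (1 - Real.exp (-M ^ 2 * t₂)) := by rw [EqII]
      _ = σ₂ ^ 2 * (1 - Real.exp (-M ^ 2 * t₂)) *
          (Real.exp (-q ^ 2 * t₂) * (1 - Real.exp (-δ * t₂))) := by ring
      _ = σ₁ ^ 2 * (1 - Real.exp (-M ^ 2 * t₁)) *
          (Real.exp (-q ^ 2 * t₂) * (1 - Real.exp (-δ * t₂))) := by rw [← EqI]
      _ = σ₁ ^ 2 * (Real.exp (-q ^ 2 * t₂) * (1 - Real.exp (-δ * t₂))) *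
          (1 - Real.exp (-M ^ 2 * t₁)) := by ring
  have hEq : Real.exp (-q ^ 2 * t₁) * (1 - Real.exp (-δ * t₁)) * (1 - Real.exp (-M ^ 2 * t₂)) =
      Real.exp (-q ^ 2 * t₂) * (1 - Real.exp (-δ * t₂)) * (1 - Real.exp (-M ^ 2 * t₁)) := by
    apply mul_left_cancel₀ (ne_of_gt hA)
    linarith [step]
  have hγp : 0 < M ^ 2 := by positivity
  have hγδ : M ^ 2 < δ := by
    have hMq := mul_pos hMpos hq
    rw [hδ]; linarith [hMq]
  have hαp : 0 < q ^ 2 := by positivity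
  rcases lt_or_gt_of_ne htne with hlt | hgt
  · have hk := key_ineq_s18 hγp hγδ hαp ht₁p hlt
    linarith [hEq, hk]
  · have hk := key_ineq_s18 hγp hγδ hαp ht₂p hgt
    linarith [hEq, hk]
end
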